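/- arXiv:2209.01123 — 5 statements merged into one kernel-verified Lean document; each statement's English description precedes it below -/
import Mathlib

section
/- Let K be a normal subgroup of a direct product G_1 × G_2 × ⋯ × G_k of nonabelian free groups. If K has nontrivial projection to the factor G_i, then K ∩ G_i is a nontrivial (indeed nonabelian) normal subgroup of G_i. -/
open FreeGroup

open FreeGroup

lemma aux_list {β : Type*} (x : β) : ∀ (L : List β), x :: L = L ++ [x] → ∀ y ∈ L, y = x := by
  intro L
  induction L with
  | nil => simp
  | cons z t ih =>
    intro h y hy
    rw [List.cons_append] at h
    injection h with h1 h2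
    subst h1
    rcases List.mem_cons.mp hy with rfl | hyt
    · rfl
    · exact ih h2 y hyt

lemma commute_of_gen {α : Type*} [DecidableEq α] (a : α) :
    ∀ n (w : FreeGroup α), w.toWord.length = n → w * of a = of a * w →
      ∃ m : ℤ, w = of a ^ m := by
  intro n
  induction n using Nat.strong_induction_on with
  | _ n ih =>
  intro w hlen hcomm
  have hof : (of a : FreeGroup α) = mk [(a, true)] := rfl
  have hred : reduce w.toWord = w.toWord := reduce_toWord w
  rcases hL : w.toWord with _ | ⟨⟨b, s⟩, t⟩
  · exact ⟨0, by rw [zpow_zero]; exact toWord_eq_nil_iff.mp hL⟩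
  · by_cases hb : b = a
    · subst hb
      cases s
      · -- head is (b, false) : strip with of b * w
        have h1 : of b * w = mk ((b, true) :: w.toWord) := by
          conv_lhs => rw [hof, ← mk_toWord (x := w)]
          rw [mul_mk]
          rfl
        have ht : (of b * w).toWord = t := by
          rw [h1, toWord_mk, hL, reduce.cons]
          rw [hL] at hred
          rw [hred]
          simp
        have hlt : t.length < n := by
          rw [← hlen, hL]; simp [List.length_cons]
        have hc' : (of b * w) * of b = of b * (of b * w) := by
          rw [mul_assoc, hcomm]
        obtain ⟨m, hm⟩ := ih t.length hlt (of b * w) (by rw [ht]) hc'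
        refine ⟨-1 + m, ?_⟩
        have hw : w = (of b)⁻¹ * (of b * w) := by group
        rw [hw, hm, zpow_add, zpow_neg_one]
      · -- head is (b, true) : strip with (of b)⁻¹ * w
        have h1 : (of b)⁻¹ * w = mk ((b, false) :: w.toWord) := by
          have hinv : ((of b)⁻¹ : FreeGroup α) = mk [(b, false)] := by
            rw [hof, inv_mk]
            simp [invRev]
          conv_lhs => rw [hinv, ← mk_toWord (x := w)]
          rw [mul_mk]
          rfl
        have ht : ((of b)⁻¹ * w).toWord = t := by
          rw [h1, toWord_mk, hL, reduce.cons]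
          rw [hL] at hred
          rw [hred]
          simp
        have hlt : t.length < n := by
          rw [← hlen, hL]; simp [List.length_cons]
        have hc' : ((of b)⁻¹ * w) * of b = of b * ((of b)⁻¹ * w) := by
          rw [mul_assoc, hcomm]
          group
        obtain ⟨m, hm⟩ := ih t.length hlt ((of b)⁻¹ * w) (by rw [ht]) hc'
        refine ⟨1 + m, ?_⟩
        have hw : w = of b * ((of b)⁻¹ * w) := by group
        rw [hw, hm, zpow_add, zpow_one]
    · exfalso
      have h1 : of a * w = mk ((a, true) :: w.toWord) := by
        conv_lhs => rw [hof, ← mk_toWord (x := w)]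
        rw [mul_mk]
        rfl
      have h2 : (of a * w).toWord = (a, true) :: w.toWord := by
        rw [h1, toWord_mk, hL, reduce.cons]
        rw [hL] at hred
        rw [hred]
        have : ¬((a, true).1 = (b, s).1 ∧ (a, true).2 = !(b, s).2) := by
          intro ⟨hh, _⟩
          exact hb hh.symm
        simp only [this, if_false]
      have hsub : (w * of a).toWord.Sublist (w.toWord ++ [(a, true)]) := by
        have := toWord_mul_sublist w (of a)
        rwa [toWord_of] at this
      have hlen2 : (w * of a).toWord.length = w.toWord.length + 1 := by
        rw [hcomm, h2]; simp
      have heq : (w * of a).toWord = w.toWord ++ [(a, true)] := by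
        apply hsub.eq_of_length
        rw [hlen2]; simp
      have hkey : (a, true) :: w.toWord = w.toWord ++ [(a, true)] := by
        rw [← h2, ← hcomm, heq]
      have := aux_list _ _ hkey (b, s) (by rw [hL]; exact List.mem_cons_self)
      exact hb (congrArg Prod.fst this)


open FreeGroup

section FreeGroupLemmas

variable {α : Type*}

lemma of_not_commute [DecidableEq α] {a b : α} (h : a ≠ b) :
    (of a : FreeGroup α) * of b ≠ of b * of a := by
  intro hc
  let f : α → Equiv.Perm (Fin 3) := fun x =>
    if x = a then Equiv.swap 0 1 else if x = b then Equiv.swap 1 2 else 1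
  have := congrArg (FreeGroup.lift f) hc
  rw [MonoidHom.map_mul, MonoidHom.map_mul, lift_apply_of, lift_apply_of] at this
  simp only [f, if_pos rfl, if_neg (Ne.symm h), if_pos rfl] at this
  have h2 : (Equiv.swap (0:Fin 3) 1 * Equiv.swap 1 2) ≠ (Equiv.swap 1 2 * Equiv.swap 0 1) := by
    decide
  exact h2 this

lemma of_zpow_eq_one {a : α} {k : ℤ} (h : (of a : FreeGroup α) ^ k = 1) : k = 0 := by
  have := congrArg (FreeGroup.lift (fun _ : α => Multiplicative.ofAdd (1 : ℤ))) h
  rw [map_zpow, lift_apply_of, MonoidHom.map_one] at this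
  have h2 := congrArg Multiplicative.toAdd this
  simpa using h2

lemma of_zpow_eq_of_zpow [DecidableEq α] {a b : α} (h : a ≠ b) {m n : ℤ}
    (he : (of a : FreeGroup α) ^ m = of b ^ n) : m = 0 := by
  have := congrArg (FreeGroup.lift (fun x : α =>
    if x = a then Multiplicative.ofAdd (1 : ℤ) else 1)) he
  rw [map_zpow, map_zpow, lift_apply_of, lift_apply_of, if_pos rfl, if_neg (Ne.symm h), one_zpow] at this
  have h2 := congrArg Multiplicative.toAdd this
  simpa using h2

lemma all_powers (a : α) (hs : ∀ b : α, b = a) (x : FreeGroup α) :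
    ∃ m : ℤ, x = of a ^ m := by
  induction x using FreeGroup.induction_on with
  | C1 => exact ⟨0, by simp⟩
  | of b => exact ⟨1, by rw [zpow_one]; exact congrArg of (hs b)⟩
  | inv_of b ih =>
    obtain ⟨m, hm⟩ := ih
    exact ⟨-m, by rw [hm, zpow_neg]⟩
  | mul x y hx hy =>
    obtain ⟨m, hm⟩ := hx
    obtain ⟨n, hn⟩ := hy
    exact ⟨m + n, by rw [hm, hn, zpow_add]⟩

lemma all_one (he : IsEmpty α) (x : FreeGroup α) : x = 1 := by
  induction x using FreeGroup.induction_on with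
  | C1 => rfl
  | of b => exact he.elim b
  | inv_of b ih => rw [ih, inv_one]
  | mul x y hx hy => rw [hx, hy, one_mul]

end FreeGroupLemmas

section Abstract

variable {F : Type*} [Group F] [IsFreeGroup F]

lemma free_center {z : F} (hz1 : z ≠ 1) (hz : ∀ g : F, z * g = g * z) (x y : F) :
    x * y = y * x := by
  obtain ⟨ι, ⟨bas⟩⟩ := ‹IsFreeGroup F›.nonempty_basis
  classical
  set e := bas.repr with he
  by_cases hsub : ∀ b c : ι, b = c
  · rcases isEmpty_or_nonempty ι with hι | ⟨⟨a⟩⟩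
    · apply e.injective
      rw [_root_.map_mul, _root_.map_mul, all_one hι (e x), all_one hι (e y)]
    · obtain ⟨mx, hmx⟩ := all_powers a (fun b => hsub b a) (e x)
      obtain ⟨my, hmy⟩ := all_powers a (fun b => hsub b a) (e y)
      apply e.injective
      rw [_root_.map_mul, _root_.map_mul, hmx, hmy, ← zpow_add, ← zpow_add, add_comm]
  · exfalso
    push_neg at hsub
    obtain ⟨b, c, hbc⟩ := hsub
    have key : ∀ d : ι, e z * of d = of d * e z := by
      intro d
      have h1 := hz (e.symm (of d))
      have h2 := congrArg e h1
      rw [_root_.map_mul, _root_.map_mul, MulEquiv.apply_symm_apply] at h2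
      exact h2
    obtain ⟨m, hm⟩ := commute_of_gen b _ (e z) rfl (key b)
    obtain ⟨n, hn⟩ := commute_of_gen c _ (e z) rfl (key c)
    have hm0 : m = 0 := of_zpow_eq_of_zpow hbc (hm ▸ hn)
    apply hz1
    apply e.injective
    rw [hm, hm0, zpow_zero, _root_.map_one]

lemma free_comm_trans {x u v : F} (hx : x ≠ 1)
    (hu : u * x = x * u) (hv : v * x = x * v) : u * v = v * u := by
  set H := Subgroup.centralizer ({x} : Set F) with hH
  have hmem : ∀ {g : F}, g * x = x * g → g ∈ H := by
    intro g hg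
    rw [hH, Subgroup.mem_centralizer_iff]
    rintro y ⟨rfl⟩
    exact hg.symm
  have hxH : x ∈ H := hmem rfl
  have huH : u ∈ H := hmem hu
  have hvH : v ∈ H := hmem hv
  have hzH : (⟨x, hxH⟩ : H) ≠ 1 := fun h => hx (congrArg Subtype.val h)
  have hcentral : ∀ g : H, (⟨x, hxH⟩ : H) * g = g * ⟨x, hxH⟩ := by
    intro g
    apply Subtype.ext
    exact g.2 x rfl
  have := free_center hzH hcentral (⟨u, huH⟩ : H) ⟨v, hvH⟩
  exact congrArg Subtype.val this

lemma free_comm_cyclic {H : Type*} [Group H] [IsFreeGroup H]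
    (hcomm : ∀ u v : H, u * v = v * u) :
    ∃ z : H, (∀ w : H, ∃ m : ℤ, w = z ^ m) ∧
      ((∀ w : H, w = 1) ∨ ∀ k : ℤ, z ^ k = 1 → k = 0) := by
  obtain ⟨ι, ⟨bas⟩⟩ := ‹IsFreeGroup H›.nonempty_basis
  classical
  set e := bas.repr with he
  by_cases hsub : ∀ b c : ι, b = c
  · rcases isEmpty_or_nonempty ι with hι | ⟨⟨a⟩⟩
    · refine ⟨1, fun w => ⟨0, ?_⟩, Or.inl fun w => ?_⟩
      · rw [zpow_zero]
        apply e.injective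
        rw [all_one hι (e w), _root_.map_one]
      · apply e.injective
        rw [all_one hι (e w), _root_.map_one]
    · refine ⟨e.symm (of a), fun w => ?_, Or.inr fun k hk => ?_⟩
      · obtain ⟨m, hm⟩ := all_powers a (fun b => hsub b a) (e w)
        refine ⟨m, ?_⟩
        apply e.injective
        rw [_root_.map_zpow, MulEquiv.apply_symm_apply, hm]
      · apply of_zpow_eq_one (a := a)
        have := congrArg e hk
        rwa [_root_.map_zpow, MulEquiv.apply_symm_apply, _root_.map_one] at this
  · exfalso
    push_neg at hsub
    obtain ⟨b, c, hbc⟩ := hsub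
    apply of_not_commute hbc
    have := hcomm (e.symm (of b)) (e.symm (of c))
    have h2 := congrArg e this
    rwa [_root_.map_mul, _root_.map_mul, MulEquiv.apply_symm_apply, MulEquiv.apply_symm_apply] at h2

lemma centralizer_comm {x : F} (hx : x ≠ 1) :
    ∀ u v : Subgroup.centralizer ({x} : Set F), u * v = v * u := by
  intro u v
  have hu : (u : F) * x = x * u := (u.2 x rfl).symm
  have hv : (v : F) * x = x * v := (v.2 x rfl).symm
  exact Subtype.ext (free_comm_trans hx hu hv)

lemma free_zpow_eq_one {x : F} (hx : x ≠ 1) {n : ℤ} (h : x ^ n = 1) : n = 0 := by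
  set H := Subgroup.centralizer ({x} : Set F) with hH
  have hxH : x ∈ H := by
    rw [hH, Subgroup.mem_centralizer_iff]
    rintro y ⟨rfl⟩
    rfl
  obtain ⟨z, hpow, hd⟩ := free_comm_cyclic (centralizer_comm hx)
  rcases hd with hall | ztf
  · exact absurd (congrArg Subtype.val (hall ⟨x, hxH⟩)) hx
  · obtain ⟨m, hm⟩ := hpow ⟨x, hxH⟩
    have hxn : (⟨x, hxH⟩ : H) ^ n = 1 := Subtype.ext (by simpa using h)
    rw [hm, ← zpow_mul] at hxn
    rcases mul_eq_zero.mp (ztf _ hxn) with hm0 | hn0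
    · exfalso
      apply hx
      have := congrArg Subtype.val hm
      rw [hm0, zpow_zero] at this
      exact this
    · exact hn0

end Abstract

section Abstract2
variable {F : Type*} [Group F] [IsFreeGroup F]

lemma free_no_abelian_normal (hna : ∃ a b : F, a * b ≠ b * a) {c : F} (hc : c ≠ 1)
    (hcc : ∀ h : F, c * (h * c * h⁻¹) = (h * c * h⁻¹) * c) : False := by
  obtain ⟨a, b, hab⟩ := hna
  set H := Subgroup.centralizer ({c} : Set F) with hH
  have hmem : ∀ {g : F}, g * c = c * g → g ∈ H := by
    intro g hg
    rw [hH, Subgroup.mem_centralizer_iff]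
    rintro y ⟨rfl⟩
    exact hg.symm
  have hcH : c ∈ H := hmem rfl
  obtain ⟨z, hpow, hd⟩ := free_comm_cyclic (centralizer_comm hc)
  have ztf : ∀ k : ℤ, z ^ k = 1 → k = 0 := by
    rcases hd with hall | ztf
    · exact absurd (congrArg Subtype.val (hall ⟨c, hcH⟩)) hc
    · exact ztf
  obtain ⟨mc, hmc⟩ := hpow ⟨c, hcH⟩
  have hmcF : c = (z : F) ^ mc := by
    have := congrArg Subtype.val hmc
    simpa using this
  have hz1 : (z : F) ≠ 1 := by
    intro h
    apply hc
    rw [hmcF, h, one_zpow]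
  have hzc : (z : F) * c = c * (z : F) := (z.2 c rfl).symm
  -- every conjugate of z lies in the centralizer of c
  have hconj : ∀ h : F, (h * z * h⁻¹) * c = c * (h * z * h⁻¹) := by
    intro h
    have hp1 : h * c * h⁻¹ ≠ 1 := by
      intro h1
      apply hc
      have : c = h⁻¹ * (h * c * h⁻¹) * h := by group
      rw [h1] at this
      simpa using this
    have e1 : (h * z * h⁻¹) * (h * c * h⁻¹) = h * ((z : F) * c) * h⁻¹ := by group
    have e2 : (h * c * h⁻¹) * (h * z * h⁻¹) = h * (c * (z : F)) * h⁻¹ := by group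
    have hu : (h * z * h⁻¹) * (h * c * h⁻¹) = (h * c * h⁻¹) * (h * z * h⁻¹) := by
      rw [e1, e2, hzc]
    exact free_comm_trans hp1 hu (hcc h)
  -- conjugates of z are powers of z
  have hconjpow : ∀ h : F, ∃ m : ℤ, h * z * h⁻¹ = (z : F) ^ m := by
    intro h
    obtain ⟨m, hm⟩ := hpow ⟨h * z * h⁻¹, hmem (hconj h)⟩
    refine ⟨m, ?_⟩
    have := congrArg Subtype.val hm
    simpa using this
  -- hence h z h⁻¹ = z or z⁻¹
  have hpm : ∀ h : F, h * (z : F) * h⁻¹ = z ∨ h * (z : F) * h⁻¹ = (z : F)⁻¹ := by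
    intro h
    obtain ⟨m, hm⟩ := hconjpow h
    obtain ⟨n, hn⟩ := hconjpow h⁻¹
    rw [inv_inv] at hn
    have hzz : (z : F) = (z : F) ^ (n * m) := by
      have : (z : F) = h⁻¹ * (h * z * h⁻¹) * h := by group
      rw [hm] at this
      have h2 : h⁻¹ * (z : F) ^ m * h = (h⁻¹ * (z : F) * h) ^ m := by
        have h3 := conj_zpow (a := h⁻¹) (b := (z : F)) (i := m)
        rw [inv_inv] at h3; exact h3.symm
      rw [h2, hn, ← zpow_mul] at this
      exact this
    have : (z : F) ^ (n * m - 1) = 1 := by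
      rw [zpow_sub, zpow_one, ← hzz, mul_inv_cancel]
    have hsub : z ^ (n * m - 1) = 1 := by
      apply Subtype.ext
      simpa using this
    have := ztf _ hsub
    have hnm : n * m = 1 := by omega
    rcases Int.eq_one_or_neg_one_of_mul_eq_one' (mul_comm n m ▸ hnm) with ⟨hm1, _⟩ | ⟨hm1, _⟩
    · left; rw [hm, hm1, zpow_one]
    · right; rw [hm, hm1, zpow_neg, zpow_one]
  -- squares commute with z
  have hsq : ∀ h : F, (h * h) * (z : F) = (z : F) * (h * h) := by
    intro h
    have key : (h * h) * (z : F) * (h * h)⁻¹ = h * (h * (z : F) * h⁻¹) * h⁻¹ := by group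
    rcases hpm h with hz' | hz'
    · rw [hz'] at key
      rw [hz'] at key
      -- key : (h*h) * z * (h*h)⁻¹ = z
      have := mul_inv_eq_iff_eq_mul.mp key
      exact this
    · have h2 : h * ((z : F)⁻¹) * h⁻¹ = (z : F) := by
        have : h * (z : F)⁻¹ * h⁻¹ = (h * (z : F) * h⁻¹)⁻¹ := by group
        rw [this, hz', inv_inv]
      rw [hz', h2] at key
      exact mul_inv_eq_iff_eq_mul.mp key
  -- final contradiction with a, b
  have ha1 : a ≠ 1 := by rintro rfl; simp at hab
  have hb1 : b ≠ 1 := by rintro rfl; simp at hab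
  have haa : a * a ≠ 1 := by
    intro h
    have : a ^ (2 : ℤ) = 1 := by rw [show a ^ (2:ℤ) = a * a by rw [zpow_two], h]
    exact two_ne_zero (free_zpow_eq_one ha1 this)
  have hbb : b * b ≠ 1 := by
    intro h
    have : b ^ (2 : ℤ) = 1 := by rw [show b ^ (2:ℤ) = b * b by rw [zpow_two], h]
    exact two_ne_zero (free_zpow_eq_one hb1 this)
  have c1 : (a * a) * (b * b) = (b * b) * (a * a) := free_comm_trans hz1 (hsq a) (hsq b)
  have c2 : a * (b * b) = (b * b) * a :=
    free_comm_trans haa (by group) c1.symm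
  have c3 : a * b = b * a :=
    free_comm_trans hbb c2 (by group)
  exact hab c3

end Abstract2

/-- If `K` is a normal subgroup of a direct product `G_1 × ⋯ × G_k` of
nonabelian free groups and `K` has nontrivial projection to the factor `G i`, then
`K ∩ G_i` (realized as the comap of `K` under the coordinate inclusion) is a
nontrivial, indeed nonabelian, normal subgroup of `G i`. -/
theorem stmt0 {k : ℕ} (G : Fin k → Type*) [∀ i, Group (G i)] [∀ i, IsFreeGroup (G i)]
    (hna : ∀ i, ∃ a b : G i, a * b ≠ b * a)
    (K : Subgroup (∀ i, G i)) (hK : K.Normal) (i : Fin k)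
    (hproj : ∃ x ∈ K, x i ≠ 1) :
    (K.comap (MonoidHom.mulSingle G i)).Normal ∧
    K.comap (MonoidHom.mulSingle G i) ≠ ⊥ ∧
    ∃ a ∈ K.comap (MonoidHom.mulSingle G i), ∃ b ∈ K.comap (MonoidHom.mulSingle G i),
      a * b ≠ b * a := by
  obtain ⟨x, hxK, hxi⟩ := hproj
  set N := K.comap (MonoidHom.mulSingle G i) with hN
  have hNnormal : N.Normal := hK.comap _
  -- commutators with x i are in N
  have hcomm_mem : ∀ g : G i, g * (x i) * g⁻¹ * (x i)⁻¹ ∈ N := by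
    intro g
    have h1 : (MonoidHom.mulSingle G i g) * x * (MonoidHom.mulSingle G i g)⁻¹ * x⁻¹ ∈ K :=
      K.mul_mem (hK.conj_mem x hxK _) (K.inv_mem hxK)
    have h2 : MonoidHom.mulSingle G i (g * x i * g⁻¹ * (x i)⁻¹) =
        (MonoidHom.mulSingle G i g) * x * (MonoidHom.mulSingle G i g)⁻¹ * x⁻¹ := by
      funext j
      by_cases hj : j = i
      · subst hj
        simp [MonoidHom.mulSingle_apply, mul_assoc]
      · simp [MonoidHom.mulSingle_apply, Pi.mulSingle_eq_of_ne hj]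
    rw [hN, Subgroup.mem_comap, h2]
    exact h1
  -- x i is not central, pick g₀ with nontrivial commutator
  obtain ⟨g₀, hg₀⟩ : ∃ g : G i, g * x i ≠ x i * g := by
    by_contra hcon
    push_neg at hcon
    obtain ⟨A, B, hAB⟩ := hna i
    exact hAB (free_center hxi (fun g => (hcon g).symm) A B)
  set c := g₀ * x i * g₀⁻¹ * (x i)⁻¹ with hcdef
  have hcN : c ∈ N := hcomm_mem g₀
  have hc1 : c ≠ 1 := by
    intro h
    apply hg₀
    have : g₀ * x i * g₀⁻¹ = x i := by
      have := mul_inv_eq_iff_eq_mul.mp h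
      rwa [one_mul] at this
    calc g₀ * x i = (g₀ * x i * g₀⁻¹) * g₀ := by group
    _ = x i * g₀ := by rw [this]
  refine ⟨hNnormal, ?_, ?_⟩
  · intro hbot
    rw [hbot] at hcN
    exact hc1 (Subgroup.mem_bot.mp hcN)
  · by_contra hcon
    push_neg at hcon
    apply free_no_abelian_normal (hna i) hc1
    intro h
    have hconj : h * c * h⁻¹ ∈ N := hNnormal.conj_mem c hcN h
    exact hcon c hcN _ hconj
end

section
/- If H is a finite-index subgroup of a group G, then rk_F(H) = rk_F(G). -/
/-- `G` contains a direct product of `k` nonabelian free groups, i.e. `rk_F(G) ≥ k`. -/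
def HasProdRank (G : Type*) [Group G] (k : ℕ) : Prop :=
  ∃ f : ((Fin k → FreeGroup Bool)) →* G, Function.Injective f

section Aux

/-- The unipotent matrix `[[1,1],[0,1]]` as a unit. -/
private def matA : (Matrix (Fin 2) (Fin 2) ℤ)ˣ :=
  ⟨!![1,1;0,1], !![1,-1;0,1],
    by simp [Matrix.mul_fin_two, Matrix.one_fin_two],
    by simp [Matrix.mul_fin_two, Matrix.one_fin_two]⟩

/-- The unipotent matrix `[[1,0],[1,1]]` as a unit. -/
private def matB : (Matrix (Fin 2) (Fin 2) ℤ)ˣ :=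
  ⟨!![1,0;1,1], !![1,0;-1,1],
    by simp [Matrix.mul_fin_two, Matrix.one_fin_two],
    by simp [Matrix.mul_fin_two, Matrix.one_fin_two]⟩

private lemma matA_pow (n : ℕ) :
    (matA : Matrix (Fin 2) (Fin 2) ℤ) ^ n = !![1, (n : ℤ); 0, 1] := by
  induction n with
  | zero => simp [Matrix.one_fin_two]
  | succ n ih =>
    rw [pow_succ, ih]
    push_cast
    norm_num [matA, Matrix.mul_fin_two, add_comm]

private lemma matB_pow (n : ℕ) :
    (matB : Matrix (Fin 2) (Fin 2) ℤ) ^ n = !![1, 0; (n : ℤ), 1] := by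
  induction n with
  | zero => simp [Matrix.one_fin_two]
  | succ n ih =>
    rw [pow_succ, ih]
    push_cast
    norm_num [matB, Matrix.mul_fin_two, add_comm]

/-- `aⁿ` and `bⁿ` do not commute in the free group on two generators, for `n ≠ 0`. -/
private lemma free_noncomm {n : ℕ} (hn : n ≠ 0) :
    (FreeGroup.of true : FreeGroup Bool) ^ n * FreeGroup.of false ^ n ≠
      FreeGroup.of false ^ n * FreeGroup.of true ^ n := by
  intro h
  have h1 := congrArg (FreeGroup.lift (fun t : Bool => if t then matA else matB)) h
  simp only [map_mul, map_pow, FreeGroup.lift_apply_of, Bool.false_eq_true, if_true, if_false] at h1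
  have h2 := congrArg (fun u : (Matrix (Fin 2) (Fin 2) ℤ)ˣ =>
    (u : Matrix (Fin 2) (Fin 2) ℤ) 1 1) h1
  simp only [Units.val_mul, Units.val_pow_eq_pow_val, matA_pow, matB_pow,
    Matrix.mul_fin_two] at h2
  norm_num at h2
  exact hn h2

/-- A free group on a subsingleton type is commutative. -/
private lemma freeGroup_commute {X : Type*} [Subsingleton X] (x y : FreeGroup X) :
    Commute x y := by
  induction x using FreeGroup.induction_on with
  | C1 => exact Commute.one_left y
  | of a =>
    induction y using FreeGroup.induction_on with
    | C1 => exact Commute.one_right _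
    | of b => rw [Subsingleton.elim a b]
    | inv_of b hb => exact hb.inv_right
    | mul u v hu hv => exact hu.mul_right hv
  | inv_of a ha => exact ha.inv_left
  | mul u v hu hv => exact hu.mul_left hv

/-- A nonabelian free group contains a copy of the free group on two generators. -/
private lemma exists_embed (F : Type*) [Group F] [IsFreeGroup F]
    (h : ∃ x y : F, ¬ Commute x y) :
    ∃ j : FreeGroup Bool →* F, Function.Injective j := by
  obtain ⟨x, y, hxy⟩ := h
  let e : F ≃* FreeGroup (IsFreeGroup.Generators F) := IsFreeGroup.toFreeGroup F
  have hnt : Nontrivial (IsFreeGroup.Generators F) := by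
    rw [← not_subsingleton_iff_nontrivial]
    intro hS
    exact hxy (e.injective (by
      simpa only [map_mul] using (freeGroup_commute (e x) (e y)).eq))
  obtain ⟨s, t, hst⟩ := exists_pair_ne (IsFreeGroup.Generators F)
  let g : Bool → IsFreeGroup.Generators F := fun b => if b then s else t
  have hg : Function.Injective g := by
    intro a b hab
    cases a <;> cases b <;> simp_all [g]
  obtain ⟨r, hr⟩ := hg.hasLeftInverse
  have hmapg : Function.Injective (FreeGroup.map g) := by
    intro u v huv
    have h1 := congrArg (FreeGroup.map r) huv
    rw [FreeGroup.map.comp, FreeGroup.map.comp] at h1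
    have hrg : r ∘ g = id := funext hr
    rwa [hrg, FreeGroup.map.id, FreeGroup.map.id] at h1
  exact ⟨e.symm.toMonoidHom.comp (FreeGroup.map g),
    fun u v huv => hmapg (e.symm.injective huv)⟩

end Aux

/-- If `H` has finite index in `G` then `rk_F(H) = rk_F(G)`. -/
theorem stmt3 {G : Type*} [Group G] (H : Subgroup G) (hfi : H.FiniteIndex) (k : ℕ) :
    HasProdRank H k ↔ HasProdRank G k := by
  constructor
  · rintro ⟨f, hf⟩
    exact ⟨H.subtype.comp f, fun a b hab => hf (Subgroup.subtype_injective H hab)⟩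
  · rintro ⟨f, hf⟩
    set K : Subgroup (Fin k → FreeGroup Bool) := H.comap f with hKdef
    haveI : K.FiniteIndex := by
      constructor
      rw [hKdef, Subgroup.index_comap]
      intro h0
      exact hfi.index_ne_zero (Subgroup.index_eq_zero_of_relIndex_eq_zero h0)
    set N : Subgroup (Fin k → FreeGroup Bool) := K.normalCore with hNdef
    haveI hNfi : N.FiniteIndex := Subgroup.finiteIndex_normalCore K
    set n := N.index with hn_def
    have hn : n ≠ 0 := hNfi.index_ne_zero
    -- the coordinate copies of the free group inside `P`
    let ι : Fin k → (FreeGroup Bool →* (Fin k → FreeGroup Bool)) :=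
      fun i => MonoidHom.mulSingle (fun _ : Fin k => FreeGroup Bool) i
    let Ni : Fin k → Subgroup (FreeGroup Bool) := fun i => N.comap (ι i)
    have hpow : ∀ (i : Fin k) (g : FreeGroup Bool), g ^ n ∈ Ni i := by
      intro i g
      show ι i (g ^ n) ∈ N
      rw [map_pow]
      exact Subgroup.pow_index_mem N _
    -- each `Ni i` is a nonabelian free group
    have hnc : ∀ i : Fin k, ∃ x y : (Ni i), ¬ Commute x y := by
      intro i
      refine ⟨⟨_, hpow i (FreeGroup.of true)⟩, ⟨_, hpow i (FreeGroup.of false)⟩, ?_⟩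
      intro hc
      have := congrArg (Subtype.val) hc.eq
      simp only [Subgroup.coe_mul] at this
      exact free_noncomm hn this
    choose J hJ using fun i => exists_embed (Ni i) (hnc i)
    -- assemble a componentwise embedding of `P` into `N ≤ K`
    let Φ : (Fin k → FreeGroup Bool) →* (Fin k → FreeGroup Bool) :=
      { toFun := fun x i => ((J i (x i) : (Ni i)) : FreeGroup Bool)
        map_one' := by
          funext i
          simp only [Pi.one_apply, map_one, OneMemClass.coe_one]
        map_mul' := fun x y => by
          funext i
          simp only [Pi.mul_apply, map_mul, Subgroup.coe_mul] }
    have hΦinj : Function.Injective Φ := by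
      intro u v huv
      funext i
      exact hJ i (Subtype.ext (congrFun huv i))
    have hΦmem : ∀ x : Fin k → FreeGroup Bool, Φ x ∈ K := by
      intro x
      refine Subgroup.normalCore_le K ?_
      rw [← Finset.noncommProd_mulSingle (Φ x)]
      refine Subgroup.noncommProd_mem N _ fun i _ => ?_
      have h2 := (J i (x i)).2
      rw [Subgroup.mem_comap] at h2
      exact h2
    refine ⟨(f.comp Φ).codRestrict H (fun x => (hΦmem x : f (Φ x) ∈ H)), ?_⟩
    intro u v huv
    exact hΦinj (hf (congrArg Subtype.val huv))
end

section
/- If 1 → N → G → Q → 1 is a short exact sequence of groups, then rk_F(G) ≤ rk_F(N) + rk_F(Q). -/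
namespace Stmt4Aux

open FreeGroup

/-- Reducedness relation: `a` followed by `b` is not a cancelling pair. -/
def NRel (a b : Bool × Bool) : Prop := ¬(a.1 = b.1 ∧ a.2 = !b.2)

instance (a b : Bool × Bool) : Decidable (NRel a b) := by unfold NRel; infer_instance

lemma L1 : ∀ a b : Bool × Bool, b ≠ (a.1, !a.2) → NRel a b := by decide
lemma L2 : ∀ a b : Bool × Bool, b ≠ (a.1, !a.2) → NRel b a := by decide
lemma L3 : ∀ a b : Bool × Bool, b ≠ a → NRel a (b.1, !b.2) := by decide
lemma L4 : ∀ a b : Bool × Bool, b ≠ (a.1, !a.2) → NRel (b.1, !b.2) (a.1, !a.2) := by decide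
lemma L5 : ∀ a b : Bool × Bool, b ≠ a → NRel (b.1, !b.2) a := by decide

lemma choice_letters : ∀ A B : Bool × Bool, ∃ p q : Bool × Bool,
    p ≠ A ∧ p ≠ (B.1, !B.2) ∧ q ≠ B ∧ q ≠ (A.1, !A.2) ∧ q ≠ (p.1, !p.2) := by decide

lemma chain_reduce (L : List (Bool × Bool)) : List.Chain' NRel (reduce L) := by
  induction L with
  | nil => exact List.isChain_nil
  | cons x L ih =>
    rw [reduce.cons]
    cases h : reduce L with
    | nil => exact List.isChain_singleton _
    | cons a tl =>
      rw [h] at ih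
      dsimp only
      by_cases hc : x.1 = a.1 ∧ x.2 = !a.2
      · rw [if_pos hc]; exact ih.tail
      · rw [if_neg hc]; exact List.isChain_cons_cons.mpr ⟨hc, ih⟩

lemma reduce_eq_self {L : List (Bool × Bool)} (h : List.Chain' NRel L) : reduce L = L := by
  induction L with
  | nil => rfl
  | cons x L ih =>
    rw [reduce.cons, ih h.tail]
    cases L with
    | nil => rfl
    | cons a tl =>
      dsimp only
      rw [if_neg (List.isChain_cons_cons.mp h).1]

lemma toWord_mk_eq {L : List (Bool × Bool)} (h : List.Chain' NRel L) :
    (FreeGroup.mk L).toWord = L := by rw [toWord_mk, reduce_eq_self h]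

lemma chain_toWord (x : FreeGroup Bool) : List.Chain' NRel x.toWord := by
  rw [← reduce_toWord]; exact chain_reduce _

/-- KEY: any nontrivial element of the free group fails to commute with some conjugate
of itself. -/
lemma exists_conj_not_commute {h : FreeGroup Bool} (hh : h ≠ 1) :
    ∃ g : FreeGroup Bool, h * (g * h * g⁻¹) ≠ (g * h * g⁻¹) * h := by
  have hw : h.toWord ≠ [] := fun e => hh (FreeGroup.toWord_eq_nil_iff.mp e)
  obtain ⟨c, t, hct⟩ := List.exists_cons_of_ne_nil hw
  set w : List (Bool × Bool) := c :: t with hwdef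
  have hcw : List.Chain' NRel w := hct ▸ chain_toWord h
  have hmkh : FreeGroup.mk w = h := by rw [← hct]; exact FreeGroup.mk_toWord
  have hwne : w ≠ [] := List.cons_ne_nil _ _
  set B : Bool × Bool := w.getLast hwne with hB
  obtain ⟨p, q, h1, h2, h3, h4, h5⟩ := choice_letters c B
  refine ⟨FreeGroup.mk [p, q], ?_⟩
  have hinv : (FreeGroup.mk [p, q])⁻¹ = FreeGroup.mk [(q.1, !q.2), (p.1, !p.2)] := by
    rw [FreeGroup.inv_mk]; congr 1
  have hlast : w.getLast? = some B := List.getLast?_eq_getLast_of_ne_nil hwne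
  -- chain facts
  have chainV : List.Chain' NRel [p, q] := List.isChain_cons_cons.mpr ⟨L1 p q h5, List.isChain_singleton q⟩
  have chainV' : List.Chain' NRel [(q.1, !q.2), (p.1, !p.2)] :=
    List.isChain_cons_cons.mpr ⟨L4 p q h5, List.isChain_singleton _⟩
  have jBP : ∀ x ∈ w.getLast?, ∀ y ∈ ([p, q] : List (Bool × Bool)).head?, NRel x y := by
    intro x hx y hy
    rw [hlast] at hx
    simp only [List.head?] at hy
    obtain rfl : B = x := by simpa using hx
    obtain rfl : p = y := by simpa using hy
    exact L1 B p h2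
  have s1 : List.Chain' NRel (w ++ [p, q]) := hcw.append chainV jBP
  have jQA : ∀ x ∈ ([p, q] : List (Bool × Bool)).getLast?, ∀ y ∈ w.head?, NRel x y := by
    intro x hx y hy
    obtain rfl : q = x := by simpa using hx
    obtain rfl : c = y := by rw [hwdef] at hy; simpa using hy
    exact L2 c q h4
  have t1 : List.Chain' NRel ([p, q] ++ w) := chainV.append hcw jQA
  have jBQ' : ∀ x ∈ w.getLast?, ∀ y ∈ ([(q.1, !q.2), (p.1, !p.2)] : List (Bool × Bool)).head?,
      NRel x y := by
    intro x hx y hy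
    rw [hlast] at hx
    obtain rfl : B = x := by simpa using hx
    obtain rfl : (q.1, !q.2) = y := by simpa using hy
    exact L3 B q h3
  have t2 : List.Chain' NRel (([p, q] ++ w) ++ [(q.1, !q.2), (p.1, !p.2)]) := by
    refine t1.append chainV' ?_
    intro x hx y hy
    rw [List.getLast?_append_of_ne_nil _ hwne] at hx
    exact jBQ' x hx y hy
  have c2 : List.Chain' NRel ((([p, q] ++ w) ++ [(q.1, !q.2), (p.1, !p.2)]) ++ w) := by
    refine t2.append hcw ?_
    intro x hx y hy
    rw [List.getLast?_append_of_ne_nil _ (by simp)] at hx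
    obtain rfl : (p.1, !p.2) = x := by simpa using hx
    obtain rfl : c = y := by rw [hwdef] at hy; simpa using hy
    exact L5 c p h1
  have c1 : List.Chain' NRel (w ++ (([p, q] ++ w) ++ [(q.1, !q.2), (p.1, !p.2)])) := by
    refine hcw.append t2 ?_
    intro x hx y hy
    obtain rfl : p = y := by simpa using hy
    rw [hlast] at hx
    obtain rfl : B = x := by simpa using hx
    exact L1 B p h2
  intro heq
  rw [← hmkh, hinv] at heq
  simp only [FreeGroup.mul_mk] at heq
  have heqw := congrArg FreeGroup.toWord heq
  rw [toWord_mk_eq c1, toWord_mk_eq c2] at heqw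
  have hhead := congrArg List.head? heqw
  rw [hwdef] at hhead
  simp only [List.cons_append, List.head?] at hhead
  exact h1 (by injection hhead with hh'; exact hh'.symm)


/-- A nontrivial element that commutes with everything in the free group is trivial. -/
lemma eq_one_of_commute_all {z : FreeGroup Bool} (hz : ∀ w, z * w = w * z) : z = 1 := by
  by_contra hne
  obtain ⟨g, hg⟩ := exists_conj_not_commute hne
  apply hg
  have e : g * z * g⁻¹ = z := by rw [← hz g, mul_inv_cancel_right]
  rw [e]

/-- The free group on a subsingleton type is commutative. -/
lemma subsingleton_comm {β : Type*} [Subsingleton β] (x y : FreeGroup β) : x * y = y * x := by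
  have htop : ∀ z : FreeGroup β, z ∈ Subgroup.closure (Set.range (FreeGroup.of : β → FreeGroup β)) := by
    intro z; rw [FreeGroup.closure_range_of]; trivial
  have hgen : ∀ z : FreeGroup β, ∀ a : β, FreeGroup.of a * z = z * FreeGroup.of a := by
    intro z a
    have h1 : Subgroup.closure (Set.range (FreeGroup.of : β → FreeGroup β)) ≤
        Subgroup.centralizer (Set.range (FreeGroup.of : β → FreeGroup β)) := by
      rw [Subgroup.closure_le]
      rintro s ⟨b, rfl⟩
      rw [SetLike.mem_coe, Subgroup.mem_centralizer_iff]
      rintro g ⟨a', rfl⟩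
      rw [Subsingleton.elim a' b]
    exact Subgroup.mem_centralizer_iff.mp (h1 (htop z)) _ ⟨a, rfl⟩
  have h2 : Subgroup.closure (Set.range (FreeGroup.of : β → FreeGroup β)) ≤
      Subgroup.centralizer {x} := by
    rw [Subgroup.closure_le]
    rintro s ⟨a, rfl⟩
    rw [SetLike.mem_coe, Subgroup.mem_centralizer_iff]
    rintro g hg
    rw [Set.mem_singleton_iff] at hg
    rw [hg]
    exact (hgen x a).symm
  exact Subgroup.mem_centralizer_iff.mp (h2 (htop y)) x rfl

/-- Any nonabelian free group contains a copy of the free group on two generators. -/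
lemma exists_embedding_of_noncomm {M : Type*} [Group M] [IsFreeGroup M]
    {a b : M} (hab : a * b ≠ b * a) :
    ∃ j : FreeGroup Bool →* M, Function.Injective j := by
  classical
  obtain ⟨g₁, g₂, hg⟩ : ∃ g₁ g₂ : IsFreeGroup.Generators M, g₁ ≠ g₂ := by
    by_contra hc
    push_neg at hc
    haveI : Subsingleton (IsFreeGroup.Generators M) := ⟨hc⟩
    apply hab
    apply (IsFreeGroup.toFreeGroup (G := M)).injective
    rw [MulEquiv.map_mul, MulEquiv.map_mul]
    exact subsingleton_comm _ _
  let inc : Bool → IsFreeGroup.Generators M := fun t => if t then g₁ else g₂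
  let r : IsFreeGroup.Generators M → Bool := fun x => if x = g₁ then true else false
  have hri : r ∘ inc = id := by
    funext t
    cases t with
    | false => simp [r, inc, Ne.symm hg]
    | true => simp [r, inc]
  have hinj : Function.Injective (FreeGroup.map inc) := by
    apply Function.LeftInverse.injective (g := FreeGroup.map r)
    intro x
    rw [FreeGroup.map.comp, hri]
    exact FreeGroup.map.id x
  exact ⟨(IsFreeGroup.toFreeGroup (G := M)).symm.toMonoidHom.comp (FreeGroup.map inc),
    ((IsFreeGroup.toFreeGroup (G := M)).symm.injective).comp hinj⟩

/-- A conjugation-invariant nontrivial subgroup of the free group contains a copy of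
the free group. -/
lemma subgroup_embed {H : Subgroup (FreeGroup Bool)}
    (hconj : ∀ y ∈ H, ∀ c : FreeGroup Bool, c * y * c⁻¹ ∈ H)
    {x : FreeGroup Bool} (hx : x ∈ H) (hx1 : x ≠ 1) :
    ∃ j : FreeGroup Bool →* FreeGroup Bool, Function.Injective j ∧ ∀ z, j z ∈ H := by
  obtain ⟨g, hg⟩ := exists_conj_not_commute hx1
  have hbH : g * x * g⁻¹ ∈ H := hconj x hx g
  set M := Subgroup.closure ({x, g * x * g⁻¹} : Set (FreeGroup Bool)) with hM
  have hMH : M ≤ H := by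
    rw [hM, Subgroup.closure_le]
    rintro s hs
    simp only [Set.mem_insert_iff, Set.mem_singleton_iff] at hs
    rcases hs with rfl | rfl
    · exact hx
    · exact hbH
  have hxM : x ∈ M := Subgroup.subset_closure (by simp)
  have hbM : g * x * g⁻¹ ∈ M := Subgroup.subset_closure (by simp)
  have hne : (⟨x, hxM⟩ : M) * ⟨g * x * g⁻¹, hbM⟩ ≠ (⟨g * x * g⁻¹, hbM⟩ : M) * ⟨x, hxM⟩ := by
    intro hcon
    exact hg (congrArg Subtype.val hcon)
  obtain ⟨j, hj⟩ := exists_embedding_of_noncomm hne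
  refine ⟨M.subtype.comp j, ?_, fun z => hMH (j z).2⟩
  exact Subtype.val_injective.comp hj

/-- Embedding of a product of free groups indexed by a finset into the big product. -/
def toPi {k : ℕ} (T : Finset (Fin k)) (q : Fin k → (FreeGroup Bool →* FreeGroup Bool)) :
    (Fin T.card → FreeGroup Bool) →* (Fin k → FreeGroup Bool) where
  toFun u i := if h : i ∈ T then q i (u ((T.orderIsoOfFin rfl).symm ⟨i, h⟩)) else 1
  map_one' := by funext i; by_cases h : i ∈ T <;> simp [h]
  map_mul' u v := by funext i; by_cases h : i ∈ T <;> simp [h]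

lemma toPi_apply_mem {k : ℕ} (T : Finset (Fin k)) (q) {i : Fin k} (h : i ∈ T) (u) :
    toPi T q u i = q i (u ((T.orderIsoOfFin rfl).symm ⟨i, h⟩)) := dif_pos h

lemma toPi_apply_not_mem {k : ℕ} (T : Finset (Fin k)) (q) {i : Fin k} (h : i ∉ T) (u) :
    toPi T q u i = 1 := dif_neg h

lemma toPi_injective {k : ℕ} (T : Finset (Fin k)) (q)
    (hq : ∀ i ∈ T, Function.Injective (q i)) : Function.Injective (toPi T q) := by
  intro u v huv
  funext j
  have hmem : ((T.orderIsoOfFin rfl) j : Fin k) ∈ T := ((T.orderIsoOfFin rfl) j).2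
  have h1 := congrFun huv ((T.orderIsoOfFin rfl) j : Fin k)
  rw [toPi_apply_mem T q hmem, toPi_apply_mem T q hmem] at h1
  have h2 : ((T.orderIsoOfFin rfl).symm ⟨((T.orderIsoOfFin rfl) j : Fin k), hmem⟩) = j :=
    (T.orderIsoOfFin rfl).symm_apply_apply j
  rw [h2] at h1
  exact hq _ hmem h1

end Stmt4Aux

/-- If `1 → N → G → Q → 1` is a short exact sequence of groups then
`rk_F(G) ≤ rk_F(N) + rk_F(Q)`. -/
theorem stmt4 {N G Q : Type*} [Group N] [Group G] [Group Q]
    (f : N →* G) (g : G →* Q) (hf : Function.Injective f) (hg : Function.Surjective g)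
    (hexact : f.range = g.ker) (k : ℕ) (hk : HasProdRank G k) :
    ∃ l m : ℕ, k ≤ l + m ∧ HasProdRank N l ∧ HasProdRank Q m := by
  classical
  obtain ⟨φ, hφ⟩ := hk
  set ψ : (Fin k → FreeGroup Bool) →* Q := g.comp φ with hψdef
  set S : Finset (Fin k) :=
    Finset.univ.filter (fun i => ∃ x : FreeGroup Bool, x ≠ 1 ∧ Pi.mulSingle i x ∈ ψ.ker) with hS
  have hSmem : ∀ i : Fin k,
      i ∈ S ↔ ∃ x : FreeGroup Bool, x ≠ 1 ∧ Pi.mulSingle i x ∈ ψ.ker := by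
    intro i; simp [hS]
  -- every element of the kernel is supported on `S`
  have hsupp : ∀ p : Fin k → FreeGroup Bool, p ∈ ψ.ker → ∀ i, i ∉ S → p i = 1 := by
    intro p hp i hiS
    apply Stmt4Aux.eq_one_of_commute_all
    intro c
    have hconjmem : Pi.mulSingle i c * p * (Pi.mulSingle i c)⁻¹ * p⁻¹ ∈ ψ.ker :=
      mul_mem ((MonoidHom.normal_ker ψ).conj_mem p hp (Pi.mulSingle i c)) (inv_mem hp)
    have heqs : Pi.mulSingle i c * p * (Pi.mulSingle i c)⁻¹ * p⁻¹
        = Pi.mulSingle i (c * p i * c⁻¹ * (p i)⁻¹) := by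
      funext j
      by_cases hj : j = i
      · subst hj
        simp [Pi.mul_apply, Pi.inv_apply, Pi.mulSingle_eq_same]
      · simp [Pi.mul_apply, Pi.inv_apply, Pi.mulSingle_eq_of_ne hj]
    rw [heqs] at hconjmem
    have h1 : c * p i * c⁻¹ * (p i)⁻¹ = 1 := by
      by_contra hne
      exact hiS ((hSmem i).mpr ⟨_, hne, hconjmem⟩)
    have h2 : c * p i * c⁻¹ = p i := mul_inv_eq_one.mp h1
    rw [mul_inv_eq_iff_eq_mul] at h2
    exact h2.symm
  have hcard : S.card + Sᶜ.card = k := by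
    rw [Finset.card_add_card_compl, Fintype.card_fin]
  refine ⟨S.card, Sᶜ.card, hcard.ge, ?_, ?_⟩
  · -- `HasProdRank N S.card`
    have hq : ∀ i ∈ S, ∃ j : FreeGroup Bool →* FreeGroup Bool,
        Function.Injective j ∧ ∀ z, Pi.mulSingle i (j z) ∈ ψ.ker := by
      intro i hi
      obtain ⟨x, hx1, hxK⟩ := (hSmem i).mp hi
      have hconj : ∀ y ∈ ψ.ker.comap (MonoidHom.mulSingle (fun _ : Fin k => FreeGroup Bool) i),
          ∀ c : FreeGroup Bool,
          c * y * c⁻¹ ∈ ψ.ker.comap (MonoidHom.mulSingle (fun _ : Fin k => FreeGroup Bool) i) := by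
        intro y hy c
        rw [Subgroup.mem_comap] at hy ⊢
        rw [map_mul, map_mul, map_inv]
        exact (MonoidHom.normal_ker ψ).conj_mem _ hy _
      have hxmem : x ∈ ψ.ker.comap (MonoidHom.mulSingle (fun _ : Fin k => FreeGroup Bool) i) := by
        rw [Subgroup.mem_comap]
        exact hxK
      obtain ⟨j, hj1, hj2⟩ := Stmt4Aux.subgroup_embed hconj hxmem hx1
      exact ⟨j, hj1, fun z => Subgroup.mem_comap.mp (hj2 z)⟩
    choose jfun hjinj hjker using hq
    set q : Fin k → (FreeGroup Bool →* FreeGroup Bool) :=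
      fun i => if h : i ∈ S then jfun i h else MonoidHom.id _ with hqdef
    have hqinj : ∀ i ∈ S, Function.Injective (q i) := by
      intro i hi
      rw [hqdef]
      simp only [dif_pos hi]
      exact hjinj i hi
    have hmemK : ∀ u, Stmt4Aux.toPi S q u ∈ ψ.ker := by
      intro u
      rw [← Finset.noncommProd_mulSingle (Stmt4Aux.toPi S q u)]
      apply Subgroup.noncommProd_mem
      intro i _
      by_cases hi : i ∈ S
      · rw [Stmt4Aux.toPi_apply_mem S q hi]
        have hqi : q i = jfun i hi := by rw [hqdef]; simp only [dif_pos hi]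
        rw [hqi]
        exact hjker i hi _
      · rw [Stmt4Aux.toPi_apply_not_mem S q hi, Pi.mulSingle_one]
        exact one_mem _
    have hrange : ∀ u, (φ.comp (Stmt4Aux.toPi S q)) u ∈ f.range := by
      intro u
      rw [hexact, MonoidHom.mem_ker]
      have h := hmemK u
      rw [MonoidHom.mem_ker] at h
      simpa [hψdef] using h
    refine ⟨(MonoidHom.ofInjective hf).symm.toMonoidHom.comp
      ((φ.comp (Stmt4Aux.toPi S q)).codRestrict f.range hrange), ?_⟩
    have hcod : Function.Injective
        ((φ.comp (Stmt4Aux.toPi S q)).codRestrict f.range hrange) := by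
      intro a b hab
      exact (hφ.comp (Stmt4Aux.toPi_injective S q hqinj)) (congrArg Subtype.val hab)
    exact ((MonoidHom.ofInjective hf).symm.injective).comp hcod
  · -- `HasProdRank Q Sᶜ.card`
    set q0 : Fin k → (FreeGroup Bool →* FreeGroup Bool) := fun _ => MonoidHom.id _ with hq0
    refine ⟨ψ.comp (Stmt4Aux.toPi Sᶜ q0), ?_⟩
    rw [injective_iff_map_eq_one]
    intro u hu
    have hmem : Stmt4Aux.toPi Sᶜ q0 u ∈ ψ.ker := hu
    have hzero : Stmt4Aux.toPi Sᶜ q0 u = 1 := by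
      funext i
      simp only [Pi.one_apply]
      by_cases hi : i ∈ S
      · exact Stmt4Aux.toPi_apply_not_mem Sᶜ q0 (by simpa using hi) u
      · exact hsupp _ hmem i hi
    exact Stmt4Aux.toPi_injective Sᶜ q0 (fun i _ => fun a b hab => hab)
      (hzero.trans (map_one _).symm)
end

section
/- If a subgroup H of GL(2,ℤ) consists entirely of matrices of determinant 1 and trace 2 (together with the identity), then H is cyclic; in fact H is conjugate into the group of upper unitriangular matrices. -/
open Matrix

private theorem kerlem5 (a b c : ℤ) (h : a*a + b*c = 0) :
    ∃ p q r s : ℤ, p*s - q*r = 1 ∧ a*p + b*r = 0 ∧ c*p - a*r = 0 := by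
  by_cases hb : b = 0
  · have ha : a = 0 := mul_self_eq_zero.mp (by linarith [h, hb ▸ h])
    exact ⟨0, -1, 1, 0, by ring, by simp [ha, hb], by simp [ha]⟩
  · set g : ℤ := (Int.gcd b a : ℤ) with hg
    have hg0 : 0 < Int.gcd b a := Int.gcd_pos_of_ne_zero_left a hb
    have hdb : g ∣ b := Int.gcd_dvd_left b a
    have hda : g ∣ a := Int.gcd_dvd_right b a
    have hcop : Int.gcd (b / g) (a / g) = 1 := Int.gcd_div_gcd_div_gcd (by exact_mod_cast hg0)
    obtain ⟨x, y, hxy⟩ := Int.isCoprime_iff_gcd_eq_one.mpr hcop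
    obtain ⟨b', hb'⟩ := hdb; obtain ⟨a', ha'⟩ := hda
    have hgne : g ≠ 0 := Int.natCast_ne_zero.mpr hg0.ne'
    refine ⟨b / g, y, -(a / g), x, by linarith, ?_, ?_⟩
    · rw [hb', ha', Int.mul_ediv_cancel_left _ hgne, Int.mul_ediv_cancel_left _ hgne]; ring
    · rw [hb', ha', Int.mul_ediv_cancel_left _ hgne, Int.mul_ediv_cancel_left _ hgne]
      have h2 : g * (c * b' + a * a') = 0 := by linear_combination h - c*hb' - a*ha'
      rcases mul_eq_zero.mp h2 with h3 | h3
      · exact absurd h3 hgne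
      · linear_combination h3 - a'*ha'

/-- A subgroup of `GL(2,ℤ)` all of whose nonidentity elements have
determinant 1 and trace 2 is cyclic, and indeed is conjugate into the group of
upper unitriangular matrices. -/
theorem stmt5 (H : Subgroup (GL (Fin 2) ℤ))
    (hH : ∀ M ∈ H, M ≠ 1 →
      ((M : Matrix (Fin 2) (Fin 2) ℤ)).det = 1 ∧
      Matrix.trace ((M : Matrix (Fin 2) (Fin 2) ℤ)) = 2) :
    IsCyclic ↥H ∧
    ∃ P : GL (Fin 2) ℤ, ∀ M ∈ H,
      (((P⁻¹ * M * P : GL (Fin 2) ℤ) : Matrix (Fin 2) (Fin 2) ℤ) 1 0 = 0 ∧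
       ((P⁻¹ * M * P : GL (Fin 2) ℤ) : Matrix (Fin 2) (Fin 2) ℤ) 0 0 = 1 ∧
       ((P⁻¹ * M * P : GL (Fin 2) ℤ) : Matrix (Fin 2) (Fin 2) ℤ) 1 1 = 1) := by
  -- uniform facts
  have htr : ∀ M ∈ H, Matrix.trace ((M : Matrix (Fin 2) (Fin 2) ℤ)) = 2 := by
    intro M hM
    by_cases h1 : M = 1
    · subst h1
      rw [Units.val_one, Matrix.trace_one]
      norm_num
    · exact (hH M hM h1).2
  have hdet : ∀ M ∈ H, ((M : Matrix (Fin 2) (Fin 2) ℤ)).det = 1 := by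
    intro M hM
    by_cases h1 : M = 1
    · subst h1; rw [Units.val_one, Matrix.det_one]
    · exact (hH M hM h1).1
  by_cases htriv : ∀ M ∈ H, M = 1
  · constructor
    · have : Subsingleton H := ⟨fun a b =>
        Subtype.ext ((htriv a.1 a.2).trans (htriv b.1 b.2).symm)⟩
      exact isCyclic_of_subsingleton
    · refine ⟨1, fun M hM => ?_⟩
      rw [htriv M hM]
      norm_num [Matrix.one_apply]
  · push_neg at htriv
    obtain ⟨M₀, hM₀H, hM₀⟩ := htriv
    set A₀ : Matrix (Fin 2) (Fin 2) ℤ := (M₀ : Matrix (Fin 2) (Fin 2) ℤ) with hA₀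
    set a : ℤ := A₀ 0 0 - 1 with hadef
    set b : ℤ := A₀ 0 1 with hbdef
    set c : ℤ := A₀ 1 0 with hcdef
    have htrA₀ : A₀ 0 0 + A₀ 1 1 = 2 := by
      have := htr M₀ hM₀H; rwa [Matrix.trace_fin_two] at this
    have hdetA₀ : A₀ 0 0 * A₀ 1 1 - A₀ 0 1 * A₀ 1 0 = 1 := by
      have := hdet M₀ hM₀H; rwa [Matrix.det_fin_two] at this
    have hkey : a*a + b*c = 0 := by
      have h11 : A₀ 1 1 = 1 - a := by rw [hadef]; linarith
      rw [hadef, hbdef, hcdef]; linear_combination A₀ 0 0 * htrA₀ - hdetA₀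
    obtain ⟨p, q, r, s, pdet, k1, k2⟩ := kerlem5 a b c hkey
    have hPP : !![p,q;r,s] * !![s,-q;-r,p] = (1 : Matrix (Fin 2) (Fin 2) ℤ) := by
      ext i j
      fin_cases i <;> fin_cases j <;>
        simp [Matrix.mul_apply, Fin.sum_univ_two, Matrix.one_apply] <;> linarith
    have hPP' : !![s,-q;-r,p] * !![p,q;r,s] = (1 : Matrix (Fin 2) (Fin 2) ℤ) := by
      ext i j
      fin_cases i <;> fin_cases j <;>
        simp [Matrix.mul_apply, Fin.sum_univ_two, Matrix.one_apply] <;> linarith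
    set P : GL (Fin 2) ℤ := ⟨!![p,q;r,s], !![s,-q;-r,p], hPP, hPP'⟩ with hPdef
    have hPval : (P : Matrix (Fin 2) (Fin 2) ℤ) = !![p,q;r,s] := rfl
    have hPinv : ((P⁻¹ : GL (Fin 2) ℤ) : Matrix (Fin 2) (Fin 2) ℤ) = !![s,-q;-r,p] := rfl
    -- conjugation preserves trace and det
    have htrB : ∀ M : GL (Fin 2) ℤ,
        Matrix.trace ((P⁻¹ * M * P : GL (Fin 2) ℤ) : Matrix (Fin 2) (Fin 2) ℤ) =
          Matrix.trace ((M : Matrix (Fin 2) (Fin 2) ℤ)) := by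
      intro M
      rw [Units.val_mul, Units.val_mul, Matrix.trace_mul_cycle]
      have h1 : ((P : Matrix (Fin 2) (Fin 2) ℤ)) * ((P⁻¹ : GL (Fin 2) ℤ) : Matrix (Fin 2) (Fin 2) ℤ) = 1 := by
        rw [← Units.val_mul, mul_inv_cancel, Units.val_one]
      rw [h1, one_mul]
    have hdetB : ∀ M : GL (Fin 2) ℤ,
        ((P⁻¹ * M * P : GL (Fin 2) ℤ) : Matrix (Fin 2) (Fin 2) ℤ).det =
          ((M : Matrix (Fin 2) (Fin 2) ℤ)).det := by
      intro M
      rw [Units.val_mul, Units.val_mul, Matrix.det_mul, Matrix.det_mul]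
      have h1 : ((P⁻¹ : GL (Fin 2) ℤ) : Matrix (Fin 2) (Fin 2) ℤ).det * ((P : Matrix (Fin 2) (Fin 2) ℤ)).det = 1 := by
        rw [← Matrix.det_mul, ← Units.val_mul, inv_mul_cancel, Units.val_one, Matrix.det_one]
      linear_combination ((M : Matrix (Fin 2) (Fin 2) ℤ)).det * h1
    -- B₀ facts
    set B₀ : Matrix (Fin 2) (Fin 2) ℤ := ((P⁻¹ * M₀ * P : GL (Fin 2) ℤ) : Matrix (Fin 2) (Fin 2) ℤ) with hB₀def
    have hB₀eq : B₀ = !![s,-q;-r,p] * A₀ * !![p,q;r,s] := by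
      rw [hB₀def, Units.val_mul, Units.val_mul, hPinv, hPval, hA₀]
    have hA00 : A₀ 0 0 = a + 1 := by rw [hadef]; ring
    have hA11 : A₀ 1 1 = 1 - a := by rw [hadef]; linarith
    have hB₀10 : B₀ 1 0 = 0 := by
      rw [hB₀eq]
      simp only [Matrix.mul_apply, Fin.sum_univ_two]
      simp [hA00, hA11, ← hbdef, ← hcdef]
      linear_combination p*k2 - r*k1
    have hB₀00 : B₀ 0 0 = 1 := by
      rw [hB₀eq]
      simp only [Matrix.mul_apply, Fin.sum_univ_two]
      simp [hA00, hA11, ← hbdef, ← hcdef]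
      linear_combination pdet + s*k1 - q*k2
    have hB₀tr : B₀ 0 0 + B₀ 1 1 = 2 := by
      have h1 := (htrB M₀).trans (htr M₀ hM₀H)
      rw [← hB₀def, Matrix.trace_fin_two] at h1
      exact h1
    have hB₀11 : B₀ 1 1 = 1 := by linarith [hB₀tr, hB₀00]
    set s₀ : ℤ := B₀ 0 1 with hs₀def
    have hs₀ : s₀ ≠ 0 := by
      intro h0
      apply hM₀
      have hBone : B₀ = 1 := by
        ext i j
        fin_cases i <;> fin_cases j <;>
          simp [Matrix.one_apply, hB₀00, hB₀11, hB₀10, ← hs₀def, h0]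
      have : (P⁻¹ * M₀ * P : GL (Fin 2) ℤ) = 1 := Units.ext (by rw [← hB₀def, hBone, Units.val_one])
      have h2 : M₀ = P * 1 * P⁻¹ := by
        rw [← this]; group
      rwa [mul_one, mul_inv_cancel] at h2
    -- main entry lemma for all M ∈ H
    have hmain : ∀ M ∈ H,
        ((P⁻¹ * M * P : GL (Fin 2) ℤ) : Matrix (Fin 2) (Fin 2) ℤ) 1 0 = 0 ∧
        ((P⁻¹ * M * P : GL (Fin 2) ℤ) : Matrix (Fin 2) (Fin 2) ℤ) 0 0 = 1 ∧
        ((P⁻¹ * M * P : GL (Fin 2) ℤ) : Matrix (Fin 2) (Fin 2) ℤ) 1 1 = 1 := by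
      intro M hM
      set B : Matrix (Fin 2) (Fin 2) ℤ := ((P⁻¹ * M * P : GL (Fin 2) ℤ) : Matrix (Fin 2) (Fin 2) ℤ) with hBdef
      have hBtr : B 0 0 + B 1 1 = 2 := by
        have h1 := (htrB M).trans (htr M hM)
        rwa [← hBdef, Matrix.trace_fin_two] at h1
      have hBdet : B 0 0 * B 1 1 - B 0 1 * B 1 0 = 1 := by
        have h1 := (hdetB M).trans (hdet M hM)
        rwa [← hBdef, Matrix.det_fin_two] at h1
      -- trace of product
      have hprod : (P⁻¹ * M * P) * (P⁻¹ * M₀ * P) = P⁻¹ * (M * M₀) * P := by group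
      have htrprod : Matrix.trace (B * B₀) = 2 := by
        have h1 : B * B₀ = ((P⁻¹ * (M * M₀) * P : GL (Fin 2) ℤ) : Matrix (Fin 2) (Fin 2) ℤ) := by
          rw [hBdef, hB₀def, ← Units.val_mul, hprod]
        rw [h1, htrB (M * M₀)]
        exact htr (M * M₀) (H.mul_mem hM hM₀H)
      have hexp : B 0 0 * B₀ 0 0 + B 0 1 * B₀ 1 0 + (B 1 0 * B₀ 0 1 + B 1 1 * B₀ 1 1) = 2 := by
        rw [Matrix.trace_fin_two] at htrprod
        simp only [Matrix.mul_apply, Fin.sum_univ_two] at htrprod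
        linarith [htrprod]
      rw [hB₀00, hB₀10, hB₀11, ← hs₀def] at hexp
      have hB10 : B 1 0 = 0 := by
        have h1 : B 1 0 * s₀ = 0 := by linarith
        rcases mul_eq_zero.mp h1 with h2 | h2
        · exact h2
        · exact absurd h2 hs₀
      have hB00 : B 0 0 = 1 := by
        have h1 : (B 0 0 - 1) ^ 2 = 0 := by
          rw [hB10] at hBdet; linear_combination B 0 0 * hBtr - hBdet
        have := pow_eq_zero_iff (n := 2) (by norm_num) |>.mp h1
        linarith [this]
      exact ⟨hB10, hB00, by linarith⟩
    constructor
    · -- cyclic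
      have hconjinj : ∀ M N : GL (Fin 2) ℤ, P⁻¹ * M * P = P⁻¹ * N * P → M = N := by
        intro M N h
        calc M = P * (P⁻¹ * M * P) * P⁻¹ := by group
          _ = P * (P⁻¹ * N * P) * P⁻¹ := by rw [h]
          _ = N := by group
      let φ : ↥H →* Multiplicative ℤ :=
        { toFun := fun M =>
            Multiplicative.ofAdd (((P⁻¹ * (M : GL (Fin 2) ℤ) * P : GL (Fin 2) ℤ) : Matrix (Fin 2) (Fin 2) ℤ) 0 1)
          map_one' := by
            simp only [Subgroup.coe_one, mul_one, inv_mul_cancel, Units.val_one]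
            norm_num [Matrix.one_apply]
          map_mul' := by
            intro M N
            obtain ⟨hM10, hM00, hM11⟩ := hmain M.1 M.2
            obtain ⟨hN10, hN00, hN11⟩ := hmain N.1 N.2
            have hprod : (P⁻¹ * (M.1 * N.1) * P) = (P⁻¹ * M.1 * P) * (P⁻¹ * N.1 * P) := by group
            have h1 : ((P⁻¹ * (M.1 * N.1) * P : GL (Fin 2) ℤ) : Matrix (Fin 2) (Fin 2) ℤ) 0 1 =
                ((P⁻¹ * M.1 * P : GL (Fin 2) ℤ) : Matrix (Fin 2) (Fin 2) ℤ) 0 1 +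
                ((P⁻¹ * N.1 * P : GL (Fin 2) ℤ) : Matrix (Fin 2) (Fin 2) ℤ) 0 1 := by
              rw [hprod, Units.val_mul]
              simp only [Matrix.mul_apply, Fin.sum_univ_two]
              rw [hM00, hN11]
              ring
            have hc : ((M * N : ↥H) : GL (Fin 2) ℤ) = (M : GL (Fin 2) ℤ) * (N : GL (Fin 2) ℤ) := rfl
            rw [hc, h1, ofAdd_add] }
      have hinj : Function.Injective φ := by
        intro M N h
        have h01 : ((P⁻¹ * (M : GL (Fin 2) ℤ) * P : GL (Fin 2) ℤ) : Matrix (Fin 2) (Fin 2) ℤ) 0 1 =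
            ((P⁻¹ * (N : GL (Fin 2) ℤ) * P : GL (Fin 2) ℤ) : Matrix (Fin 2) (Fin 2) ℤ) 0 1 := by
          exact_mod_cast congrArg Multiplicative.toAdd h
        obtain ⟨hM10, hM00, hM11⟩ := hmain M.1 M.2
        obtain ⟨hN10, hN00, hN11⟩ := hmain N.1 N.2
        have hmat : ((P⁻¹ * (M : GL (Fin 2) ℤ) * P : GL (Fin 2) ℤ) : Matrix (Fin 2) (Fin 2) ℤ) =
            ((P⁻¹ * (N : GL (Fin 2) ℤ) * P : GL (Fin 2) ℤ) : Matrix (Fin 2) (Fin 2) ℤ) := by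
          ext i j
          fin_cases i <;> fin_cases j <;> simp [hM10, hM00, hM11, hN10, hN00, hN11, h01]
        exact Subtype.ext (hconjinj _ _ (Units.ext hmat))
      have : IsCyclic (Multiplicative ℤ) := inferInstance
      exact isCyclic_of_surjective (MonoidHom.ofInjective hinj).symm
        (MonoidHom.ofInjective hinj).symm.surjective
    · exact ⟨P, hmain⟩
end

section
/- Let τ_0, τ_1 ∈ Aut(F_2) be Nielsen transformations. If ⟨τ_0⟩ ∩ ⟨τ_1⟩ ≠ 1, then τ_0 = τ_1 or τ_0 = τ_1⁻¹. -/
/-- The endomorphism of `F₂ = FreeGroup Bool` sending `x₁ = of true ↦ x₁x₂` and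
`x₂ = of false ↦ x₂`. -/
def nielsenHom : FreeGroup Bool →* FreeGroup Bool :=
  FreeGroup.lift fun b =>
    bif b then FreeGroup.of true * FreeGroup.of false else FreeGroup.of false

/-- Its inverse, sending `x₁ ↦ x₁x₂⁻¹`, `x₂ ↦ x₂`. -/
def nielsenHomInv : FreeGroup Bool →* FreeGroup Bool :=
  FreeGroup.lift fun b =>
    bif b then FreeGroup.of true * (FreeGroup.of false)⁻¹ else FreeGroup.of false

/-- The standard Nielsen transformation `τ₀ ∈ Aut(F₂)`: `x₁ ↦ x₁x₂`, `x₂ ↦ x₂`. -/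
def nielsenTau : MulAut (FreeGroup Bool) :=
  MonoidHom.toMulEquiv nielsenHom nielsenHomInv
    (FreeGroup.ext_hom _ _ (by rintro (_ | _) <;> simp [nielsenHom, nielsenHomInv]))
    (FreeGroup.ext_hom _ _ (by rintro (_ | _) <;> simp [nielsenHom, nielsenHomInv]))

namespace Stmt14

abbrev F := FreeGroup Bool
abbrev A : F := FreeGroup.of false
abbrev B : F := FreeGroup.of true

/-! ### A syllable normal form for `FreeGroup Bool`.

An element is written as `a^{m₀} b^{ε₁} a^{m₁} ⋯ b^{ε_R} a^{m_R}` where each `ε_i = ±1`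
(encoded as a `Bool`) and the exponent `m_i` is nonzero whenever `ε_i ≠ ε_{i+1}`. -/

def Bg (ε : Bool) : F := bif ε then B else B⁻¹

@[simp] lemma Bg_true : Bg true = B := rfl
@[simp] lemma Bg_false : Bg false = B⁻¹ := rfl

def evalL : List (Bool × ℤ) → F
  | [] => 1
  | (ε, m) :: r => Bg ε * A ^ m * evalL r

def evalNF : ℤ × List (Bool × ℤ) → F := fun n => A ^ n.1 * evalL n.2

def relOk (x y : Bool × ℤ) : Prop := x.1 ≠ y.1 → x.2 ≠ 0

instance : DecidableRel relOk := fun x y => by unfold relOk; infer_instance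

def Ok (L : List (Bool × ℤ)) : Prop := List.Chain' relOk L

lemma ok_nil : Ok [] := List.isChain_nil

def bcons (ε : Bool) : ℤ × List (Bool × ℤ) → ℤ × List (Bool × ℤ)
  | (m₀, []) => (0, [(ε, m₀)])
  | (m₀, (ε', m₁) :: r) =>
      if m₀ = 0 ∧ ε' = !ε then (m₁, r) else (0, (ε, m₀) :: (ε', m₁) :: r)

lemma eval_bcons (ε : Bool) (n : ℤ × List (Bool × ℤ)) :
    evalNF (bcons ε n) = Bg ε * evalNF n := by
  obtain ⟨m₀, L⟩ := n
  cases L with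
  | nil => cases ε <;> simp [bcons, evalNF, evalL]
  | cons x r =>
    obtain ⟨ε', m₁⟩ := x
    by_cases hc : m₀ = 0 ∧ ε' = !ε
    · obtain ⟨h1, h2⟩ := hc
      subst h1; subst h2
      cases ε <;> simp [bcons, evalNF, evalL, mul_assoc]
    · simp only [bcons, if_neg hc]
      simp [evalNF, evalL, mul_assoc]

lemma ok_bcons (ε : Bool) {n : ℤ × List (Bool × ℤ)} (h : Ok n.2) : Ok (bcons ε n).2 := by
  obtain ⟨m₀, L⟩ := n
  cases L with
  | nil => simp [bcons, Ok]; exact List.isChain_singleton _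
  | cons x r =>
    obtain ⟨ε', m₁⟩ := x
    by_cases hc : m₀ = 0 ∧ ε' = !ε
    · simp only [bcons, if_pos hc]
      exact h.tail
    · simp only [bcons, if_neg hc]
      refine List.isChain_cons_cons.2 ⟨?_, h⟩
      intro hne hm
      exact hc ⟨hm, by revert hne; cases ε <;> cases ε' <;> simp⟩

lemma bcons_of_ok (ε : Bool) (m : ℤ) (r : List (Bool × ℤ)) (h : Ok ((ε, m) :: r)) :
    bcons ε (m, r) = (0, (ε, m) :: r) := by
  cases r with
  | nil => simp [bcons]
  | cons y r' =>
    obtain ⟨ε', m₁⟩ := y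
    simp only [bcons]
    rw [if_neg]
    rintro ⟨hm, he⟩
    subst he
    have := List.isChain_cons_cons.1 h |>.1
    exact this (by cases ε <;> simp) hm

lemma bcons_bcons (ε : Bool) {n : ℤ × List (Bool × ℤ)} (h : Ok n.2) :
    bcons (!ε) (bcons ε n) = n := by
  obtain ⟨m₀, L⟩ := n
  cases L with
  | nil =>
    show bcons (!ε) (0, [(ε, m₀)]) = _
    simp [bcons]
  | cons x r =>
    obtain ⟨ε', m₁⟩ := x
    by_cases hc : m₀ = 0 ∧ ε' = !ε
    · obtain ⟨h1, h2⟩ := hc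
      subst h1; subst h2
      rw [show bcons ε ((0 : ℤ), (!ε, m₁) :: r) = (m₁, r) from by simp [bcons]]
      exact bcons_of_ok (!ε) m₁ r h
    · rw [show bcons ε (m₀, (ε', m₁) :: r) = (0, (ε, m₀) :: (ε', m₁) :: r) from by
        simp only [bcons, if_neg hc]]
      simp [bcons]

def NFS := { n : ℤ × List (Bool × ℤ) // Ok n.2 }

def ebPerm : Equiv.Perm NFS where
  toFun n := ⟨bcons true n.1, ok_bcons _ n.2⟩
  invFun n := ⟨bcons false n.1, ok_bcons _ n.2⟩
  left_inv n := Subtype.ext (by simpa using bcons_bcons true n.2)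
  right_inv n := Subtype.ext (by simpa using bcons_bcons false n.2)

def eaPerm : Equiv.Perm NFS where
  toFun n := ⟨(n.1.1 + 1, n.1.2), n.2⟩
  invFun n := ⟨(n.1.1 - 1, n.1.2), n.2⟩
  left_inv n := Subtype.ext (by simp)
  right_inv n := Subtype.ext (by simp)

@[simp] lemma ebPerm_apply (x : NFS) : (ebPerm x).1 = bcons true x.1 := rfl
@[simp] lemma ebPerm_inv_apply (x : NFS) : (ebPerm⁻¹ x).1 = bcons false x.1 := rfl
@[simp] lemma eaPerm_apply (x : NFS) : (eaPerm x).1 = (x.1.1 + 1, x.1.2) := rfl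
@[simp] lemma eaPerm_inv_apply (x : NFS) : (eaPerm⁻¹ x).1 = (x.1.1 - 1, x.1.2) := rfl

noncomputable def piHom : F →* Equiv.Perm NFS :=
  FreeGroup.lift fun x => bif x then ebPerm else eaPerm

@[simp] lemma piHom_B : piHom B = ebPerm := by simp [piHom]
@[simp] lemma piHom_A : piHom A = eaPerm := by simp [piHom]

lemma ea_zpow (m : ℤ) (n : NFS) : (eaPerm ^ m) n = ⟨(n.1.1 + m, n.1.2), n.2⟩ := by
  induction m using Int.induction_on generalizing n with
  | zero => simp; rfl
  | succ k ih =>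
    rw [zpow_add_one, Equiv.Perm.mul_apply, ih]
    refine Subtype.ext ?_
    simp only [eaPerm_apply]
    rw [Prod.mk.injEq]; exact ⟨by ring, rfl⟩
  | pred k ih =>
    rw [zpow_sub_one, Equiv.Perm.mul_apply, ih]
    refine Subtype.ext ?_
    simp only [eaPerm_inv_apply]
    rw [Prod.mk.injEq]; exact ⟨by ring, rfl⟩

def base : NFS := ⟨(0, []), ok_nil⟩

lemma pi_evalL (L : List (Bool × ℤ)) (h : Ok L) : piHom (evalL L) base = ⟨(0, L), h⟩ := by
  induction L with
  | nil => simp [evalL, base]; rfl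
  | cons x r ih =>
    obtain ⟨ε, m⟩ := x
    have hr : Ok r := h.tail
    rw [evalL, map_mul, map_mul, Equiv.Perm.mul_apply, Equiv.Perm.mul_apply,
      ih hr, map_zpow, piHom_A]
    erw [ea_zpow]
    cases ε with
    | true =>
      simp only [Bg_true, piHom_B]
      refine Subtype.ext ?_
      simp only [ebPerm_apply]
      show bcons true ((0 : ℤ) + m, r) = _
      rw [zero_add]
      exact bcons_of_ok true m r h
    | false =>
      simp only [Bg_false, map_inv, piHom_B]
      refine Subtype.ext ?_
      simp only [ebPerm_inv_apply]
      show bcons false ((0 : ℤ) + m, r) = _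
      rw [zero_add]
      exact bcons_of_ok false m r h

lemma pi_eval (m₀ : ℤ) (L : List (Bool × ℤ)) (h : Ok L) :
    piHom (evalNF (m₀, L)) base = ⟨(m₀, L), h⟩ := by
  rw [evalNF, map_mul, Equiv.Perm.mul_apply, pi_evalL L h, map_zpow, piHom_A]
  erw [ea_zpow]
  exact Subtype.ext (by simp)

theorem eval_inj {n n' : ℤ × List (Bool × ℤ)} (h : Ok n.2) (h' : Ok n'.2)
    (he : evalNF n = evalNF n') : n = n' := by
  obtain ⟨m₀, L⟩ := n; obtain ⟨m₀', L'⟩ := n'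
  have h1 := pi_eval m₀ L h
  have h2 := pi_eval m₀' L' h'
  rw [he] at h1
  exact Subtype.ext_iff.1 (h1.symm.trans h2)

theorem exists_nf (w : F) : ∃ n, Ok n.2 ∧ evalNF n = w := by
  have key : ∀ l : List (Bool × Bool), ∃ n, Ok n.2 ∧ evalNF n = FreeGroup.mk l := by
    intro l
    induction l with
    | nil => exact ⟨(0, []), ok_nil, by simp [evalNF, evalL, FreeGroup.one_eq_mk]⟩
    | cons c l ih =>
      obtain ⟨⟨m₀, L⟩, hok, hev⟩ := ih
      obtain ⟨x, s⟩ := c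
      have hmk : FreeGroup.mk ((x, s) :: l) = FreeGroup.mk [(x, s)] * FreeGroup.mk l := by
        rw [FreeGroup.mul_mk]; rfl
      cases x with
      | false =>
        cases s with
        | true =>
          refine ⟨(m₀ + 1, L), hok, ?_⟩
          rw [hmk, ← hev]
          show A ^ (m₀ + 1) * evalL L = A * (A ^ m₀ * evalL L)
          rw [add_comm m₀ 1, zpow_add, zpow_one, mul_assoc]
        | false =>
          refine ⟨(m₀ - 1, L), hok, ?_⟩
          have hB : FreeGroup.mk [((false : Bool), false)] = A⁻¹ := by
            rw [show (A : F) = FreeGroup.mk [(false, true)] from rfl, FreeGroup.inv_mk]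
            simp [FreeGroup.invRev]
          rw [hmk, hB, ← hev]
          show A ^ (m₀ - 1) * evalL L = A⁻¹ * (A ^ m₀ * evalL L)
          rw [sub_eq_neg_add, zpow_add, zpow_neg_one, mul_assoc]
      | true =>
        cases s with
        | true =>
          refine ⟨bcons true (m₀, L), ok_bcons _ hok, ?_⟩
          rw [eval_bcons, hev, hmk]; rfl
        | false =>
          refine ⟨bcons false (m₀, L), ok_bcons _ hok, ?_⟩
          have hB : FreeGroup.mk [((true : Bool), false)] = B⁻¹ := by
            rw [show (B : F) = FreeGroup.mk [(true, true)] from rfl, FreeGroup.inv_mk]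
            simp [FreeGroup.invRev]
          rw [eval_bcons, hev, hmk, hB]; rfl
  obtain ⟨n, h1, h2⟩ := key (FreeGroup.toWord w)
  exact ⟨n, h1, by rw [h2, FreeGroup.mk_toWord]⟩

/-! ### The action of powers of the Nielsen transformation on normal forms -/

lemma tau_apply (x : F) : nielsenTau x = nielsenHom x := rfl
lemma tau_A : nielsenTau A = A := by rw [tau_apply]; simp [nielsenHom]
lemma tau_B : nielsenTau B = B * A := by rw [tau_apply]; simp [nielsenHom]

lemma tau_pow_A (p : ℕ) : (nielsenTau ^ p) A = A := by
  induction p with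
  | zero => rfl
  | succ k ih => rw [pow_succ, MulAut.mul_apply, tau_A, ih]

lemma tau_pow_B (p : ℕ) : (nielsenTau ^ p) B = B * A ^ (p : ℤ) := by
  induction p with
  | zero => simp
  | succ k ih =>
    rw [pow_succ', MulAut.mul_apply, ih, map_mul, map_zpow, tau_A, tau_B]
    rw [mul_assoc, ← zpow_one_add]
    norm_num
    rw [add_comm]

def pre (q : ℤ) : List (Bool × ℤ) → ℤ
  | [] => 0
  | (true, _) :: _ => 0
  | (false, _) :: _ => -q

def go (q : ℤ) : List (Bool × ℤ) → List (Bool × ℤ)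
  | [] => []
  | (ε, m) :: r => (ε, m + (bif ε then q else 0) + pre q r) :: go q r

lemma evalL_tau_pow (p : ℕ) (L : List (Bool × ℤ)) :
    (nielsenTau ^ p) (evalL L) = A ^ (pre (p : ℤ) L) * evalL (go (p : ℤ) L) := by
  induction L with
  | nil => simp [evalL, pre, go]
  | cons x r ih =>
    obtain ⟨ε, m⟩ := x
    rw [evalL, map_mul, map_mul, map_zpow, tau_pow_A, ih]
    cases ε with
    | true =>
      rw [show Bg true = B from rfl, tau_pow_B]
      show _ = A ^ (0 : ℤ) * (Bg true * A ^ (m + (p : ℤ) + pre (p : ℤ) r) * evalL (go (p : ℤ) r))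
      rw [zpow_zero, one_mul]
      show B * A ^ (p : ℤ) * A ^ m * (A ^ pre (p : ℤ) r * evalL (go (p : ℤ) r)) = _
      rw [mul_assoc B, ← zpow_add, mul_assoc B, ← mul_assoc (A ^ ((p : ℤ) + m)), ← zpow_add,
        ← mul_assoc B]
      congr 2
      ring_nf
    | false =>
      rw [show Bg false = B⁻¹ from rfl, map_inv, tau_pow_B]
      show _ = A ^ (-(p : ℤ)) * (Bg false * A ^ (m + 0 + pre (p : ℤ) r) * evalL (go (p : ℤ) r))
      rw [mul_inv_rev, ← zpow_neg]
      show A ^ (-(p : ℤ)) * B⁻¹ * A ^ m * (A ^ pre (p : ℤ) r * evalL (go (p : ℤ) r)) = _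
      rw [mul_assoc, mul_assoc, mul_assoc]
      congr 2
      rw [← mul_assoc, ← zpow_add]
      congr 2
      ring_nf

lemma ok_go (q : ℤ) {L : List (Bool × ℤ)} (h : Ok L) : Ok (go q L) := by
  induction L with
  | nil => exact h
  | cons x r ih =>
    obtain ⟨ε, m⟩ := x
    have hr : Ok r := h.tail
    rw [go]
    refine List.isChain_cons.2 ⟨?_, ih hr⟩
    intro y hy
    cases r with
    | nil => simp [go] at hy
    | cons z r' =>
      obtain ⟨ε', m'⟩ := z
      rw [go] at hy
      simp only [List.head?_cons, Option.mem_def, Option.some.injEq] at hy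
      subst hy
      intro hne
      simp only at hne
      have hrel := (List.isChain_cons_cons.1 h).1 hne
      cases ε <;> cases ε' <;> simp_all [pre] <;> omega

lemma pre_one_eq_zero {q : ℤ} (hq : q ≠ 0) {L : List (Bool × ℤ)} (h : pre q L = 0) :
    pre 1 L = 0 := by
  cases L with
  | nil => rfl
  | cons x r =>
    obtain ⟨ε, m⟩ := x
    cases ε
    · rw [pre] at h; omega
    · rfl

lemma go_one_eq {q : ℤ} (hq : q ≠ 0) : ∀ {L : List (Bool × ℤ)}, go q L = L → go 1 L = L := by
  intro L
  induction L with
  | nil => intro; rfl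
  | cons x r ih =>
    obtain ⟨ε, m⟩ := x
    rw [go, go]
    intro h
    rw [List.cons.injEq, Prod.mk.injEq] at h
    obtain ⟨⟨-, hm⟩, hr⟩ := h
    rw [List.cons.injEq, Prod.mk.injEq, ih hr]
    refine ⟨⟨rfl, ?_⟩, rfl⟩
    cases r with
    | nil => cases ε <;> simp [pre] at hm ⊢ <;> omega
    | cons z r' =>
      obtain ⟨ε', m'⟩ := z
      cases ε <;> cases ε' <;> simp [pre] at hm ⊢ <;> omega

lemma eval_tau_pow (p : ℕ) (m₀ : ℤ) (L : List (Bool × ℤ)) :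
    (nielsenTau ^ p) (evalNF (m₀, L)) = evalNF (m₀ + pre (p : ℤ) L, go (p : ℤ) L) := by
  show (nielsenTau ^ p) (A ^ m₀ * evalL L) = A ^ (m₀ + pre (p : ℤ) L) * evalL (go (p : ℤ) L)
  rw [map_mul, map_zpow, tau_pow_A, evalL_tau_pow, ← mul_assoc, ← zpow_add]

/-- Fixed points of a positive power of `nielsenTau` are fixed by `nielsenTau`. -/
lemma fix_tau_of_pow {p : ℕ} (hp : p ≠ 0) {w : F} (hw : (nielsenTau ^ p) w = w) :
    nielsenTau w = w := by
  obtain ⟨⟨m₀, L⟩, hok, rfl⟩ := exists_nf w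
  rw [eval_tau_pow] at hw
  have hOk : Ok (m₀ + pre (p : ℤ) L, go (p : ℤ) L).2 := ok_go _ hok
  have heq := eval_inj hOk hok hw
  rw [Prod.mk.injEq] at heq
  obtain ⟨h1, h2⟩ := heq
  have hq : (p : ℤ) ≠ 0 := Int.natCast_ne_zero.2 hp
  have hpre : pre (p : ℤ) L = 0 := by omega
  have e1 : nielsenTau (evalNF (m₀, L)) = evalNF (m₀ + pre 1 L, go 1 L) := by
    have := eval_tau_pow 1 m₀ L
    rw [pow_one] at this
    rw [this]
    norm_num
  rw [e1, pre_one_eq_zero hq hpre, go_one_eq hq h2, add_zero]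

lemma fix_tau_zpow {q : ℤ} (hq : q ≠ 0) {w : F} (hw : (nielsenTau ^ q) w = w) :
    nielsenTau w = w := by
  rcases q with p | p
  · rw [Int.ofNat_eq_natCast, zpow_natCast] at hw
    exact fix_tau_of_pow (fun h0 => hq (by simp [h0])) hw
  · rw [zpow_negSucc] at hw
    refine fix_tau_of_pow (p := p + 1) (Nat.succ_ne_zero p) ?_
    calc (nielsenTau ^ (p + 1)) w
        = (nielsenTau ^ (p + 1)) ((nielsenTau ^ (p + 1))⁻¹ w) := by rw [hw]
      _ = w := MulAut.apply_inv_self _ _ _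

/-! ### Centralizer of `A` -/

def rml (s : ℤ) : List (Bool × ℤ) → List (Bool × ℤ)
  | [] => []
  | [(ε, m)] => [(ε, m + s)]
  | x :: r => x :: rml s r

lemma evalL_rml (s : ℤ) : ∀ L : List (Bool × ℤ), L ≠ [] → evalL (rml s L) = evalL L * A ^ s
  | [], h => absurd rfl h
  | [(ε, m)], _ => by simp [rml, evalL, zpow_add, mul_assoc]
  | x :: y :: r, _ => by
      rw [show rml s (x :: y :: r) = x :: rml s (y :: r) from rfl, evalL, evalL,
        evalL_rml s (y :: r) (by simp), mul_assoc, mul_assoc, mul_assoc]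

lemma ok_rml (s : ℤ) : ∀ {L : List (Bool × ℤ)}, Ok L → Ok (rml s L)
  | [], h => h
  | [(ε, m)], _ => by simp [rml, Ok]; exact List.isChain_singleton _
  | x :: y :: r, h => by
      rw [show rml s (x :: y :: r) = x :: rml s (y :: r) from rfl]
      have h1 := (List.isChain_cons_cons.1 h).1
      have h2 := (List.isChain_cons_cons.1 h).2
      refine List.isChain_cons.2 ⟨?_, ok_rml s h2⟩
      intro z hz
      obtain ⟨ε', m'⟩ := y
      cases r with
      | nil =>
        simp only [rml, List.head?_cons, Option.mem_def, Option.some.injEq] at hz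
        subst hz
        intro hne
        exact h1 hne
      | cons u r' =>
        rw [show rml s ((ε', m') :: u :: r') = (ε', m') :: rml s (u :: r') from rfl] at hz
        simp only [List.head?_cons, Option.mem_def, Option.some.injEq] at hz
        subst hz
        exact h1

lemma eq_zpow_A_of_commute {w : F} {s : ℤ} (hs : s ≠ 0) (h : w * A ^ s = A ^ s * w) :
    ∃ k : ℤ, w = A ^ k := by
  obtain ⟨⟨m₀, L⟩, hok, rfl⟩ := exists_nf w
  cases L with
  | nil => exact ⟨m₀, by simp [evalNF, evalL]⟩
  | cons x r =>
    exfalso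
    have e1 : evalNF (m₀, x :: r) * A ^ s = evalNF (m₀, rml s (x :: r)) := by
      show A ^ m₀ * evalL (x :: r) * A ^ s = A ^ m₀ * evalL (rml s (x :: r))
      rw [mul_assoc, evalL_rml s _ (by simp)]
    have e2 : A ^ s * evalNF (m₀, x :: r) = evalNF (s + m₀, x :: r) := by
      show A ^ s * (A ^ m₀ * evalL (x :: r)) = A ^ (s + m₀) * evalL (x :: r)
      rw [← mul_assoc, ← zpow_add]
    rw [e1, e2] at h
    have := eval_inj (n := (m₀, rml s (x :: r))) (n' := (s + m₀, x :: r)) (ok_rml s hok) hok h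
    have hfst : m₀ = s + m₀ := congrArg Prod.fst this
    omega

/-! ### Generator computations for integer powers of `nielsenTau` -/

lemma tau_zpow_A (k : ℤ) : (nielsenTau ^ k) A = A := by
  rcases k with p | p
  · rw [Int.ofNat_eq_natCast, zpow_natCast]; exact tau_pow_A p
  · rw [zpow_negSucc]
    calc (nielsenTau ^ (p + 1))⁻¹ A
        = (nielsenTau ^ (p + 1))⁻¹ ((nielsenTau ^ (p + 1)) A) := by rw [tau_pow_A]
      _ = A := MulAut.inv_apply_self _ _ _

lemma tau_zpow_B (k : ℤ) : (nielsenTau ^ k) B = B * A ^ k := by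
  rcases k with p | p
  · rw [Int.ofNat_eq_natCast, zpow_natCast, tau_pow_B]
  · rw [zpow_negSucc]
    apply (nielsenTau ^ (p + 1)).injective
    rw [MulAut.apply_inv_self, map_mul, map_zpow, tau_pow_B, tau_pow_A, mul_assoc, ← zpow_add]
    rw [show ((p + 1 : ℕ) : ℤ) + Int.negSucc p = 0 from by simp [Int.negSucc_eq]]
    simp

lemma aut_ext {f g : MulAut F} (hA : f A = g A) (hB : f B = g B) : f = g := by
  have : (f : F ≃* F).toMonoidHom = (g : F ≃* F).toMonoidHom := by
    refine FreeGroup.ext_hom _ _ ?_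
    rintro (_ | _) <;> simpa using (by assumption)
  exact MulEquiv.toMonoidHom_injective this

lemma conj_zpow (σ t : MulAut F) (k : ℤ) : (σ * t * σ⁻¹) ^ k = σ * t ^ k * σ⁻¹ := by
  rw [← MulAut.conj_apply σ t, ← map_zpow, MulAut.conj_apply]

lemma tau_zpow_eq_one {k : ℤ} (h : nielsenTau ^ k = 1) : k = 0 := by
  have hB := congrArg (fun φ : MulAut F => φ B) h
  simp only [MulAut.one_apply] at hB
  rw [tau_zpow_B] at hB
  have hA : A ^ k = 1 := by
    have := hB
    calc A ^ k = B⁻¹ * (B * A ^ k) := by group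
      _ = B⁻¹ * B := by rw [this]
      _ = 1 := by group
  have := eval_inj (n := (k, [])) (n' := (0, [])) ok_nil ok_nil
    (by simpa [evalNF, evalL] using hA)
  exact congrArg Prod.fst this

lemma fix_zpow {φ : MulAut F} {w : F} (h : φ w = w) : ∀ k : ℤ, (φ ^ k) w = w := by
  have hn : ∀ n : ℕ, (φ ^ n) w = w := by
    intro n
    induction n with
    | zero => rfl
    | succ m ih => rw [pow_succ, MulAut.mul_apply, h, ih]
  intro k
  rcases k with p | p
  · rw [Int.ofNat_eq_natCast, zpow_natCast]; exact hn p
  · rw [zpow_negSucc]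
    calc (φ ^ (p + 1))⁻¹ w = (φ ^ (p + 1))⁻¹ ((φ ^ (p + 1)) w) := by rw [hn (p + 1)]
      _ = w := MulAut.inv_apply_self _ _ _

/-! ### The key rigidity lemma -/

lemma key {σ σ' : MulAut F} {p q : ℤ} (hp : p ≠ 0) (hq : q ≠ 0)
    (hpq : (σ * nielsenTau * σ⁻¹) ^ p = (σ' * nielsenTau * σ'⁻¹) ^ q) :
    ∃ k : ℤ, σ * nielsenTau * σ⁻¹ = (σ' * nielsenTau * σ'⁻¹) ^ k := by
  have fixconj : ∀ (σ'' : MulAut F) (r : ℤ), r ≠ 0 → ∀ w : F,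
      ((σ'' * nielsenTau * σ''⁻¹) ^ r) w = w → (σ'' * nielsenTau * σ''⁻¹) w = w := by
    intro σ'' r hr w hw
    rw [conj_zpow] at hw
    rw [MulAut.mul_apply, MulAut.mul_apply] at hw
    have h1 : (nielsenTau ^ r) (σ''⁻¹ w) = σ''⁻¹ w := by
      apply σ''.injective
      rw [hw, MulAut.apply_inv_self]
    have h2 := fix_tau_zpow hr h1
    rw [MulAut.mul_apply, MulAut.mul_apply, h2]
    exact MulAut.apply_inv_self _ _ _
  have fix1 : ∀ w : F, nielsenTau w = w → (σ' * nielsenTau * σ'⁻¹) (σ' w) = σ' w := by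
    intro w hw
    rw [MulAut.mul_apply, MulAut.mul_apply, MulAut.inv_apply_self, hw]
  have tfixC : nielsenTau (B * A * B⁻¹) = B * A * B⁻¹ := by
    rw [map_mul, map_mul, map_inv, tau_A, tau_B]
    group
  have h1 : (σ * nielsenTau * σ⁻¹) (σ' A) = σ' A := by
    apply fixconj σ p hp
    rw [hpq]
    exact fix_zpow (fix1 A tau_A) q
  have h2 : (σ * nielsenTau * σ⁻¹) (σ' (B * A * B⁻¹)) = σ' (B * A * B⁻¹) := by
    apply fixconj σ p hp
    rw [hpq]
    exact fix_zpow (fix1 _ tfixC) q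
  set β : MulAut F := σ'⁻¹ * (σ * nielsenTau * σ⁻¹) * σ' with hβdef
  have hβA : β A = A := by
    rw [hβdef, MulAut.mul_apply, MulAut.mul_apply, h1, MulAut.inv_apply_self]
  have hβC : β (B * A * B⁻¹) = B * A * B⁻¹ := by
    rw [hβdef, MulAut.mul_apply, MulAut.mul_apply, h2, MulAut.inv_apply_self]
  have e : β B * A * (β B)⁻¹ = B * A * B⁻¹ := by
    have := hβC
    rw [map_mul, map_mul, map_inv, hβA] at this
    exact this
  have h3 : (B⁻¹ * β B) * A * (B⁻¹ * β B)⁻¹ = A := by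
    rw [show (B⁻¹ * β B) * A * (B⁻¹ * β B)⁻¹ = B⁻¹ * (β B * A * (β B)⁻¹) * B from by group, e]
    group
  have h4 : (B⁻¹ * β B) * A ^ (1 : ℤ) = A ^ (1 : ℤ) * (B⁻¹ * β B) := by
    rw [zpow_one]
    have := congrArg (fun z => z * (B⁻¹ * β B)) h3
    simpa [mul_assoc] using this
  obtain ⟨k, hk⟩ := eq_zpow_A_of_commute one_ne_zero h4
  have hβB : β B = B * A ^ k := by
    rw [← hk]; group
  have hβ : β = nielsenTau ^ k :=
    aut_ext (by rw [hβA, tau_zpow_A]) (by rw [hβB, tau_zpow_B])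
  refine ⟨k, ?_⟩
  rw [conj_zpow, ← hβ, hβdef]
  group

end Stmt14

/-- An automorphism of `F₂` is a Nielsen transformation if, with respect to some basis,
it is given by `x₁ ↦ x₁x₂`, `x₂ ↦ x₂`; equivalently it is conjugate in `Aut(F₂)` to the
standard Nielsen transformation. -/
def IsNielsen (τ : MulAut (FreeGroup Bool)) : Prop :=
  ∃ σ : MulAut (FreeGroup Bool), τ = σ * nielsenTau * σ⁻¹

/-- The fixed subgroup of an automorphism. -/
def fixedSubgroup (φ : MulAut (FreeGroup Bool)) : Subgroup (FreeGroup Bool) where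
  carrier := {x | φ x = x}
  one_mem' := map_one φ
  mul_mem' := by intro a b ha hb; simp only [Set.mem_setOf_eq, map_mul] at *; rw [ha, hb]
  inv_mem' := by intro a ha; simp only [Set.mem_setOf_eq, map_inv] at *; rw [ha]

/-- Nielsen transformations generating cyclic subgroups with nontrivial
intersection agree up to inversion. -/
theorem stmt14 (τ₀ τ₁ : MulAut (FreeGroup Bool)) (h₀ : IsNielsen τ₀) (h₁ : IsNielsen τ₁)
    (h : Subgroup.zpowers τ₀ ⊓ Subgroup.zpowers τ₁ ≠ ⊥) :
    τ₀ = τ₁ ∨ τ₀ = τ₁⁻¹ := by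
  obtain ⟨σ₀, hτ0⟩ := h₀
  obtain ⟨σ₁, hτ1⟩ := h₁
  have hφ : ∃ φ ∈ Subgroup.zpowers τ₀ ⊓ Subgroup.zpowers τ₁, φ ≠ 1 := by
    by_contra hc
    push_neg at hc
    exact h ((Subgroup.eq_bot_iff_forall _).2 hc)
  obtain ⟨φ, hmem, hne⟩ := hφ
  rw [Subgroup.mem_inf] at hmem
  obtain ⟨hm0, hm1⟩ := hmem
  obtain ⟨p, hpdef⟩ := Subgroup.mem_zpowers_iff.1 hm0
  obtain ⟨q, hqdef⟩ := Subgroup.mem_zpowers_iff.1 hm1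
  have hp0 : p ≠ 0 := by
    rintro rfl
    exact hne (by rw [← hpdef, zpow_zero])
  have hq0 : q ≠ 0 := by
    rintro rfl
    exact hne (by rw [← hqdef, zpow_zero])
  have hpq : τ₀ ^ p = τ₁ ^ q := hpdef.trans hqdef.symm
  subst hτ0
  subst hτ1
  obtain ⟨k, hk⟩ := Stmt14.key hp0 hq0 hpq
  obtain ⟨k', hk'⟩ := Stmt14.key hq0 hp0 hpq.symm
  have hself : (σ₀ * nielsenTau * σ₀⁻¹) = (σ₀ * nielsenTau * σ₀⁻¹) ^ (k' * k) := by
    rw [zpow_mul, ← hk', ← hk]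
  have hone : (σ₀ * nielsenTau * σ₀⁻¹) ^ (k' * k - 1) = 1 := by
    rw [zpow_sub, zpow_one, ← hself]
    group
  rw [Stmt14.conj_zpow] at hone
  have htau1 : nielsenTau ^ (k' * k - 1) = 1 := by
    have h5 : nielsenTau ^ (k' * k - 1)
        = σ₀⁻¹ * (σ₀ * nielsenTau ^ (k' * k - 1) * σ₀⁻¹) * σ₀ := by group
    rw [h5, hone]
    group
  have hm : k' * k - 1 = 0 := Stmt14.tau_zpow_eq_one htau1
  have hkk : k * k' = 1 := by
    have : k' * k = 1 := by omega
    linarith [mul_comm k k']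
  have hunit := Int.isUnit_iff.1 (IsUnit.of_mul_eq_one k' hkk)
  rcases hunit with h1 | h1
  · left; rw [hk, h1, zpow_one]
  · right; rw [hk, h1, zpow_neg_one]
end
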